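/- arXiv:2006.11164 — 4 statements merged into one kernel-verified Lean document; each statement's English description precedes it below -/
import Mathlib

section
/- Let n, m ∈ ℕ, p ∈ P(n) and q ∈ P(m). Then p majorises q (p ≽ q) if and only if the support of p has at most m elements and there exists an m×m doubly stochastic matrix B (nonnegative entries, every row and every column summing to 1) such that p̂ B = q, where p̂ ∈ ℝ^m is the vector consisting of the nonzero entries of p padded with zeros to length m. -/
open scoped BigOperators ENNReal

/-- A probability vector: nonnegative entries summing to 1. -/
def IsProbVec {n : ℕ} (p : Fin n → ℝ) : Prop :=
  (∀ i, 0 ≤ p i) ∧ ∑ i, p i = 1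

/-- The uniform probability vector on `n` outcomes. -/
noncomputable def uniform (n : ℕ) : Fin n → ℝ := fun _ => (n : ℝ)⁻¹

/-- Kronecker (tensor) product of two vectors. -/
noncomputable def kron {n m : ℕ} (p : Fin n → ℝ) (q : Fin m → ℝ) : Fin (n * m) → ℝ :=
  fun i => p (finProdFinEquiv.symm i).1 * q (finProdFinEquiv.symm i).2

/-- Sum of the `k` largest entries (for vectors with nonnegative entries):
the supremum of sums over subsets of at most `k` indices. -/
noncomputable def maxPartialSum {n : ℕ} (p : Fin n → ℝ) (k : ℕ) : ℝ :=
  sSup { x | ∃ s : Finset (Fin n), s.card ≤ k ∧ ∑ i ∈ s, p i = x }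

/-- `p` majorises `q`: every partial sum of the `k` largest entries of `p`
dominates that of `q` (entries beyond a vector's length count as 0). -/
def Majorizes {n m : ℕ} (p : Fin n → ℝ) (q : Fin m → ℝ) : Prop :=
  ∀ k : ℕ, maxPartialSum q k ≤ maxPartialSum p k

/-- A channel: an `n × m` row-stochastic matrix. -/
def IsStochastic {n m : ℕ} (W : Matrix (Fin n) (Fin m) ℝ) : Prop :=
  (∀ i j, 0 ≤ W i j) ∧ ∀ i, ∑ j, W i j = 1

/-- Relative majorisation of pairs: some channel maps `(p, q)` to `(p', q')`. -/
def RelMaj {n m : ℕ} (p q : Fin n → ℝ) (p' q' : Fin m → ℝ) : Prop :=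
  ∃ W : Matrix (Fin n) (Fin m) ℝ, IsStochastic W ∧
    Matrix.vecMul p W = p' ∧ Matrix.vecMul q W = q'

/-- An entropy: a `[0,∞)`-valued function on probability vectors of all finite dimensions
that is monotone under mixing (majorisation), additive for Kronecker products,
and normalised so that `H(u₂) = log 2` (binary logarithm). -/
structure IsEntropy (H : (n : ℕ) → (Fin n → ℝ) → ℝ) : Prop where
  nonneg : ∀ {n : ℕ} (p : Fin n → ℝ), IsProbVec p → 0 ≤ H n p
  mono : ∀ {n m : ℕ} (p : Fin n → ℝ) (p' : Fin m → ℝ),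
    IsProbVec p → IsProbVec p' → Majorizes p p' → H n p ≤ H m p'
  additive : ∀ {n m : ℕ} (p : Fin n → ℝ) (q : Fin m → ℝ),
    IsProbVec p → IsProbVec q → H (n * m) (kron p q) = H n p + H m q
  normalized : H 2 (uniform 2) = Real.logb 2 2

/-- A monotone divergence: a `[0,∞]`-valued function on pairs of probability vectors of
equal finite dimension satisfying the data-processing inequality and `𝔻(1‖1) = 0`. -/
structure IsMonotoneDivergence (D : (n : ℕ) → (Fin n → ℝ) → (Fin n → ℝ) → ℝ≥0∞) : Prop where
  dpi : ∀ {n m : ℕ} (p q : Fin n → ℝ) (p' q' : Fin m → ℝ),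
    IsProbVec p → IsProbVec q → IsProbVec p' → IsProbVec q' →
    RelMaj p q p' q' → D m p' q' ≤ D n p q
  normalized : D 1 (fun _ => 1) (fun _ => 1) = 0

/-- A relative entropy: data-processing inequality, additivity for Kronecker products,
and the normalisation `𝔻(e₁‖u₂) = log 2` (binary logarithm). -/
structure IsRelativeEntropy (D : (n : ℕ) → (Fin n → ℝ) → (Fin n → ℝ) → ℝ≥0∞) : Prop where
  dpi : ∀ {n m : ℕ} (p q : Fin n → ℝ) (p' q' : Fin m → ℝ),
    IsProbVec p → IsProbVec q → IsProbVec p' → IsProbVec q' →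
    RelMaj p q p' q' → D m p' q' ≤ D n p q
  additive : ∀ {n m : ℕ} (p₁ q₁ : Fin n → ℝ) (p₂ q₂ : Fin m → ℝ),
    IsProbVec p₁ → IsProbVec q₁ → IsProbVec p₂ → IsProbVec q₂ →
    D (n * m) (kron p₁ p₂) (kron q₁ q₂) = D n p₁ q₁ + D m p₂ q₂
  normalized : D 2 ![1, 0] ![1/2, 1/2] = ENNReal.ofReal (Real.logb 2 2)

/-- `phat : Fin m → ℝ` consists of the nonzero entries of `p` (in order),
padded with zeros to length `m`. -/
def IsPaddedSupport {n m : ℕ} (p : Fin n → ℝ) (phat : Fin m → ℝ) : Prop :=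
  ∃ f : {i : Fin n // p i ≠ 0} → Fin m, StrictMono f ∧
    (∀ i, phat (f i) = p i.1) ∧ (∀ j, (∀ i, f i ≠ j) → phat j = 0)

open Finset

lemma mps_set_eq {n : ℕ} (p : Fin n → ℝ) (k : ℕ) :
    { x | ∃ s : Finset (Fin n), s.card ≤ k ∧ ∑ i ∈ s, p i = x } =
      ↑((univ.powerset.filter (fun s : Finset (Fin n) => s.card ≤ k)).image
        (fun s => ∑ i ∈ s, p i)) := by
  ext x
  simp only [Set.mem_setOf_eq, coe_image, Set.mem_image, mem_coe, mem_filter, mem_powerset]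
  constructor
  · rintro ⟨s, h1, h2⟩; exact ⟨s, ⟨subset_univ s, h1⟩, h2⟩
  · rintro ⟨s, ⟨_, h1⟩, h2⟩; exact ⟨s, h1, h2⟩

lemma mps_finset {n : ℕ} (p : Fin n → ℝ) (k : ℕ) :
    ((univ.powerset.filter (fun s : Finset (Fin n) => s.card ≤ k)).image
      (fun s => ∑ i ∈ s, p i)).Nonempty := by
  exact ⟨0, mem_image.2 ⟨∅, mem_filter.2 ⟨mem_powerset.2 (empty_subset _), by simpa using Nat.zero_le k⟩,
    sum_empty⟩⟩

lemma mps_eq_max' {n : ℕ} (p : Fin n → ℝ) (k : ℕ) :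
    maxPartialSum p k = ((univ.powerset.filter (fun s : Finset (Fin n) => s.card ≤ k)).image
      (fun s => ∑ i ∈ s, p i)).max' (mps_finset p k) := by
  rw [maxPartialSum, mps_set_eq]
  exact (mps_finset p k).csSup_eq_max'

lemma le_mps {n : ℕ} (p : Fin n → ℝ) {k : ℕ} {s : Finset (Fin n)} (hs : s.card ≤ k) :
    ∑ i ∈ s, p i ≤ maxPartialSum p k := by
  rw [mps_eq_max']
  exact Finset.le_max' _ (∑ i ∈ s, p i) (mem_image.2 ⟨s, mem_filter.2 ⟨mem_powerset.2 (subset_univ s), hs⟩, rfl⟩)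

lemma mps_exists {n : ℕ} (p : Fin n → ℝ) (k : ℕ) :
    ∃ s : Finset (Fin n), s.card ≤ k ∧ ∑ i ∈ s, p i = maxPartialSum p k := by
  have h := max'_mem _ (mps_finset p k)
  rw [mem_image] at h
  obtain ⟨s, hs, h2⟩ := h
  rw [mem_filter] at hs
  exact ⟨s, hs.2, by rw [h2, mps_eq_max']⟩

lemma mps_nonneg {n : ℕ} (p : Fin n → ℝ) (k : ℕ) : 0 ≤ maxPartialSum p k := by
  simpa using le_mps p (s := ∅) (k := k) (by simp)

/-- prefix set: first k indices of Fin m -/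
def prefSet (m k : ℕ) : Finset (Fin m) := univ.filter (fun i => (i : ℕ) < k)

lemma mem_prefSet {m k : ℕ} {i : Fin m} : i ∈ prefSet m k ↔ (i : ℕ) < k := by
  simp [prefSet]

lemma prefSet_card (m k : ℕ) : (prefSet m k).card = min k m := by
  have : prefSet m k = (univ : Finset (Fin (min k m))).map (Fin.castLEEmb (min_le_right k m)) := by
    ext j
    simp only [mem_prefSet, mem_map, mem_univ, true_and, Fin.castLEEmb, Function.Embedding.coeFn_mk]
    constructor
    · intro hj
      exact ⟨⟨j, lt_min hj j.isLt⟩, by ext; simp⟩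
    · rintro ⟨i, rfl⟩
      exact lt_of_lt_of_le i.isLt (min_le_left k m)
  rw [this, card_map, card_univ, Fintype.card_fin]

lemma exists_topset {m : ℕ} (v : Fin m → ℝ) (k : ℕ) :
    ∃ T : Finset (Fin m), T.card = min k m ∧ ∀ i ∈ T, ∀ j ∉ T, v j ≤ v i := by
  induction k with
  | zero => exact ⟨∅, by simp, by simp⟩
  | succ k ih =>
    obtain ⟨T, hc, hp⟩ := ih
    by_cases h : m ≤ k
    · refine ⟨T, ?_, hp⟩
      rw [hc, min_eq_right h, min_eq_right (le_trans h (Nat.le_succ k))]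
    · push_neg at h
      have hTu : T.card < m := by rw [hc, min_eq_left h.le]; exact h
      have hne : (univ \ T).Nonempty := by
        rw [sdiff_nonempty]
        intro hsub
        have := card_le_card hsub
        simp only [card_univ, Fintype.card_fin] at this
        omega
      obtain ⟨j₀, hj₀, hj₀max⟩ := exists_max_image (univ \ T) v hne
      have hj₀T : j₀ ∉ T := (mem_sdiff.1 hj₀).2
      refine ⟨insert j₀ T, ?_, ?_⟩
      · rw [card_insert_of_notMem hj₀T, hc, min_eq_left h.le, min_eq_left h]
      · intro i hi j hj
        rw [mem_insert] at hi hj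
        push_neg at hj
        rcases hi with rfl | hi
        · exact hj₀max j (mem_sdiff.2 ⟨mem_univ _, hj.2⟩)
        · exact hp i hi j hj.2

lemma sum_mul_le_topset {m k : ℕ} (v c : Fin m → ℝ) (hv : ∀ i, 0 ≤ v i)
    (hc0 : ∀ i, 0 ≤ c i) (hc1 : ∀ i, c i ≤ 1) (hck : ∑ i, c i ≤ k)
    {T : Finset (Fin m)} (hT : T.card = min k m) (htop : ∀ i ∈ T, ∀ j ∉ T, v j ≤ v i) :
    ∑ i, c i * v i ≤ ∑ i ∈ T, v i := by
  by_cases hmk : m ≤ k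
  · -- T = univ
    have hTu : T = univ := eq_univ_of_card T (by rw [hT, min_eq_right hmk, Fintype.card_fin])
    rw [hTu]
    exact sum_le_sum (fun i _ => by
      calc c i * v i ≤ 1 * v i := mul_le_mul_of_nonneg_right (hc1 i) (hv i)
      _ = v i := one_mul _)
  · push_neg at hmk
    rcases Nat.eq_zero_or_pos k with rfl | hk
    · -- k = 0 : all c are 0
      have hcz : ∀ i, c i = 0 := by
        intro i
        have h0 : ∑ i, c i = 0 :=
          le_antisymm (by exact_mod_cast hck) (sum_nonneg fun i _ => hc0 i)
        exact (sum_eq_zero_iff_of_nonneg (fun i _ => hc0 i)).1 h0 i (mem_univ i)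
      have : ∑ i, c i * v i = 0 := sum_eq_zero fun i _ => by rw [hcz i, zero_mul]
      rw [this]
      exact sum_nonneg fun i _ => hv i
    · have hTk : T.card = k := by rw [hT, min_eq_left hmk.le]
      have hTne : T.Nonempty := card_pos.1 (by omega)
      set t := T.inf' hTne v with ht
      have h1 : ∀ i ∈ T, t ≤ v i := fun i hi => inf'_le v hi
      have h2 : ∀ j ∉ T, v j ≤ t := fun j hj => le_inf' hTne v (fun i hi => htop i hi j hj)
      have h3 : 0 ≤ t := by
        obtain ⟨i₀, _, hi₀⟩ := exists_mem_eq_inf' hTne v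
        rw [← ht] at hi₀; rw [hi₀]; exact hv i₀
      have hsplit : ∑ i, c i * v i = ∑ i ∈ T, c i * v i + ∑ i ∈ Tᶜ, c i * v i :=
        (sum_add_sum_compl T _).symm
      have hcsplit : ∑ i ∈ T, c i + ∑ i ∈ Tᶜ, c i = ∑ i, c i :=
        sum_add_sum_compl T c
      have key1 : ∑ i ∈ Tᶜ, c i * v i ≤ t * ∑ i ∈ Tᶜ, c i := by
        rw [mul_sum]
        refine sum_le_sum fun j hj => ?_
        rw [mem_compl] at hj
        calc c j * v j ≤ c j * t := mul_le_mul_of_nonneg_left (h2 j hj) (hc0 j)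
        _ = t * c j := mul_comm _ _
      have key2 : ∑ i ∈ T, c i * v i ≤ ∑ i ∈ T, v i - t * (T.card - ∑ i ∈ T, c i) := by
        have e1 : ∑ i ∈ T, v i - ∑ i ∈ T, c i * v i = ∑ i ∈ T, (1 - c i) * v i := by
          rw [← sum_sub_distrib]
          congr 1; ext i; ring
        have e2 : ∑ i ∈ T, (1 - c i) * v i ≥ ∑ i ∈ T, (1 - c i) * t :=
          sum_le_sum fun i hi =>
            mul_le_mul_of_nonneg_left (h1 i hi) (by linarith [hc1 i])
        have e3 : ∑ i ∈ T, (1 - c i) * t = (T.card - ∑ i ∈ T, c i) * t := by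
          rw [← sum_mul, sum_sub_distrib, sum_const, nsmul_eq_mul, mul_one]
        linarith [e1, e2, e3]
      have hcT : 0 ≤ ∑ i ∈ Tᶜ, c i := sum_nonneg fun i _ => hc0 i
      have hle : ∑ i ∈ T, c i + ∑ i ∈ Tᶜ, c i ≤ (T.card : ℝ) := by
        rw [hcsplit, hTk]; exact_mod_cast hck
      nlinarith [key1, key2, hsplit, hle, h3, hcT]

lemma sum_mul_le_mps {m k : ℕ} (v c : Fin m → ℝ) (hv : ∀ i, 0 ≤ v i)
    (hc0 : ∀ i, 0 ≤ c i) (hc1 : ∀ i, c i ≤ 1) (hck : ∑ i, c i ≤ k) :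
    ∑ i, c i * v i ≤ maxPartialSum v k := by
  obtain ⟨T, hT, htop⟩ := exists_topset v k
  calc ∑ i, c i * v i ≤ ∑ i ∈ T, v i := sum_mul_le_topset v c hv hc0 hc1 hck hT htop
  _ ≤ maxPartialSum v k := le_mps v (by rw [hT]; exact min_le_left k m)

lemma mps_antitone {m k : ℕ} (v : Fin m → ℝ) (hv : ∀ i, 0 ≤ v i) (ha : Antitone v) :
    maxPartialSum v k = ∑ i ∈ prefSet m k, v i := by
  classical
  have hcard : (prefSet m k).card = min k m := prefSet_card m k
  have htop : ∀ i ∈ prefSet m k, ∀ j ∉ prefSet m k, v j ≤ v i := by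
    intro i hi j hj
    rw [mem_prefSet] at hi hj
    push_neg at hj
    exact ha (by omega : i ≤ j)
  refine le_antisymm ?_ (le_mps v (by rw [hcard]; exact min_le_left k m))
  obtain ⟨s, hs, hsum⟩ := mps_exists v k
  rw [← hsum]
  have heq : ∑ i ∈ s, v i = ∑ i, (if i ∈ s then (1:ℝ) else 0) * v i := by
    simp only [ite_mul, one_mul, zero_mul]
    rw [sum_ite_mem, univ_inter]
  rw [heq]
  refine sum_mul_le_topset v _ hv (fun i => by positivity)
    (fun i => by split <;> norm_num) ?_ hcard htop
  have : ∑ i, (if i ∈ s then (1:ℝ) else 0) = s.card := by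
    simp [sum_ite_mem]
  rw [this]
  exact_mod_cast hs


lemma mps_comp_le {m k : ℕ} (v : Fin m → ℝ) (σ : Equiv.Perm (Fin m)) :
    maxPartialSum (v ∘ σ) k ≤ maxPartialSum v k := by
  obtain ⟨s, hs, hsum⟩ := mps_exists (v ∘ σ) k
  rw [← hsum]
  have : ∑ i ∈ s, (v ∘ σ) i = ∑ j ∈ s.image σ, v j :=
    (sum_image (fun a _ b _ h => σ.injective h)).symm
  rw [this]
  exact le_mps v (le_trans (card_image_le) hs)

lemma mps_perm {m k : ℕ} (v : Fin m → ℝ) (σ : Equiv.Perm (Fin m)) :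
    maxPartialSum (v ∘ σ) k = maxPartialSum v k := by
  refine le_antisymm (mps_comp_le v σ) ?_
  have := mps_comp_le (k := k) (v ∘ σ) σ⁻¹
  have he : (v ∘ ⇑σ) ∘ ⇑(σ⁻¹) = v := by
    ext i; simp
  rwa [he] at this

def IsDS {m : ℕ} (B : Matrix (Fin m) (Fin m) ℝ) : Prop :=
  (∀ i j, 0 ≤ B i j) ∧ (∀ i, ∑ j, B i j = 1) ∧ (∀ j, ∑ i, B i j = 1)

lemma IsDS.one {m : ℕ} : IsDS (1 : Matrix (Fin m) (Fin m) ℝ) := by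
  refine ⟨fun i j => ?_, fun i => ?_, fun j => ?_⟩
  · by_cases h : i = j <;> simp [Matrix.one_apply, h]
  · simp [Matrix.one_apply]
  · simp [Matrix.one_apply]

lemma IsDS.mul {m : ℕ} {A B : Matrix (Fin m) (Fin m) ℝ} (hA : IsDS A) (hB : IsDS B) :
    IsDS (A * B) := by
  refine ⟨fun i j => ?_, fun i => ?_, fun j => ?_⟩
  · rw [Matrix.mul_apply]
    exact sum_nonneg fun l _ => mul_nonneg (hA.1 i l) (hB.1 l j)
  · simp only [Matrix.mul_apply]
    rw [sum_comm]
    rw [← hA.2.1 i]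
    exact sum_congr rfl fun l _ => by rw [← mul_sum, hB.2.1 l, mul_one]
  · simp only [Matrix.mul_apply]
    rw [sum_comm, ← hB.2.2 j]
    exact sum_congr rfl fun l _ => by rw [← sum_mul, hA.2.2 l, one_mul]

/-- permutation matrix -/
def permMat {m : ℕ} (σ : Equiv.Perm (Fin m)) : Matrix (Fin m) (Fin m) ℝ :=
  fun i j => if σ i = j then 1 else 0

lemma permMat_isDS {m : ℕ} (σ : Equiv.Perm (Fin m)) : IsDS (permMat σ) := by
  refine ⟨fun i j => ?_, fun i => ?_, fun j => ?_⟩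
  · unfold permMat; split <;> norm_num
  · simp [permMat]
  · unfold permMat
    rw [Finset.sum_eq_single (σ⁻¹ j)]
    · simp
    · intro b _ hb
      rw [if_neg]
      intro h
      exact hb (by rw [← h]; simp)
    · simp

lemma vecMul_permMat {m : ℕ} (v : Fin m → ℝ) (σ : Equiv.Perm (Fin m)) :
    Matrix.vecMul v (permMat σ) = v ∘ σ.symm := by
  ext j
  rw [Matrix.vecMul, dotProduct]
  unfold permMat
  rw [Finset.sum_eq_single (σ⁻¹ j)]
  · simp [Equiv.Perm.inv_def]
  · intro b _ hb
    rw [if_neg, mul_zero]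
    intro h
    exact hb (by rw [← h]; simp)
  · simp


lemma sum_two_ite {m : ℕ} {j l : Fin m} (h : j ≠ l) (x y : ℝ) :
    ∑ k, (if k = j then x else if k = l then y else 0) = x + y := by
  classical
  have hpt : ∀ k : Fin m, (if k = j then x else if k = l then y else 0)
      = (if k = j then x else 0) + (if k = l then y else 0) := by
    intro k
    rcases eq_or_ne k j with rfl | h1
    · simp [h]
    · rcases eq_or_ne k l with rfl | h2
      · simp [h1]
      · simp [h1, h2]
  rw [sum_congr rfl (fun k _ => hpt k), sum_add_distrib]
  simp


lemma vecMul_smulMat {m : ℕ} (a : Fin m → ℝ) (c : ℝ) (A : Matrix (Fin m) (Fin m) ℝ) :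
    Matrix.vecMul a (c • A) = c • Matrix.vecMul a A := by
  ext j
  simp only [Matrix.vecMul, dotProduct, Matrix.smul_apply, smul_eq_mul,
    Pi.smul_apply, Finset.mul_sum]
  exact sum_congr rfl fun i _ => by ring

lemma IsDS.combo {m : ℕ} {A B : Matrix (Fin m) (Fin m) ℝ} (hA : IsDS A) (hB : IsDS B)
    {lam : ℝ} (h0 : 0 ≤ lam) (h1 : lam ≤ 1) : IsDS ((1 - lam) • A + lam • B) := by
  refine ⟨fun i j => ?_, fun i => ?_, fun j => ?_⟩
  · have := hA.1 i j; have := hB.1 i j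
    simp only [Matrix.add_apply, Matrix.smul_apply, smul_eq_mul]
    nlinarith
  · simp only [Matrix.add_apply, Matrix.smul_apply, smul_eq_mul, sum_add_distrib, ← mul_sum,
      hA.2.1 i, hB.2.1 i]
    ring
  · simp only [Matrix.add_apply, Matrix.smul_apply, smul_eq_mul, sum_add_distrib, ← mul_sum,
      hA.2.2 j, hB.2.2 j]
    ring

lemma prefSet_succ_eq_insert {m : ℕ} (l : Fin m) :
    prefSet m (l.val + 1) = insert l (prefSet m l.val) := by
  ext i
  simp only [mem_prefSet, mem_insert]
  constructor
  · intro hi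
    rcases Nat.lt_or_ge i.val l.val with h' | h'
    · exact Or.inr h'
    · exact Or.inl (Fin.ext (by omega))
  · rintro (rfl | hi) <;> omega

lemma hlp_sorted {m : ℕ} (d : ℕ) (a b : Fin m → ℝ)
    (ha0 : ∀ i, 0 ≤ a i) (hb0 : ∀ i, 0 ≤ b i) (haA : Antitone a) (hbA : Antitone b)
    (hsum : ∑ i, a i = ∑ i, b i)
    (hmaj : ∀ k : ℕ, ∑ i ∈ prefSet m k, b i ≤ ∑ i ∈ prefSet m k, a i)
    (hd : (univ.filter (fun i => a i ≠ b i)).card ≤ d) :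
    ∃ B : Matrix (Fin m) (Fin m) ℝ, IsDS B ∧ Matrix.vecMul a B = b := by
  classical
  induction d generalizing a with
  | zero =>
    have hab : a = b := by
      funext i
      by_contra hne
      have hmem : i ∈ univ.filter (fun i => a i ≠ b i) := mem_filter.2 ⟨mem_univ i, hne⟩
      have := card_pos.2 ⟨i, hmem⟩
      omega
    exact ⟨1, IsDS.one, by rw [Matrix.vecMul_one, hab]⟩
  | succ d ih =>
    by_cases hab : a = b
    · exact ⟨1, IsDS.one, by rw [Matrix.vecMul_one, hab]⟩
    -- find l : smallest index with a l < b l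
    have hex : ∃ i, a i ≠ b i := by
      by_contra h
      push_neg at h
      exact hab (funext h)
    have hS : (univ.filter (fun i => a i < b i)).Nonempty := by
      by_contra h
      rw [not_nonempty_iff_eq_empty, filter_eq_empty_iff] at h
      have hge : ∀ i, b i ≤ a i := fun i => not_lt.1 (h (mem_univ i))
      have hzero : ∑ i, (a i - b i) = 0 := by
        rw [sum_sub_distrib, hsum, sub_self]
      obtain ⟨i₀, hi₀⟩ := hex
      have := (sum_eq_zero_iff_of_nonneg (fun i _ => by linarith [hge i])).1 hzero i₀ (mem_univ i₀)
      exact hi₀ (by linarith)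
    set l := (univ.filter (fun i => a i < b i)).min' hS with hldef
    have hl : a l < b l := (mem_filter.1 ((univ.filter (fun i => a i < b i)).min'_mem hS)).2
    have hlmin : ∀ i, a i < b i → l ≤ i := fun i hi =>
      min'_le _ i (mem_filter.2 ⟨mem_univ i, hi⟩)
    -- find j : largest index < l with a j ≠ b j
    have hJ : (univ.filter (fun i => i < l ∧ a i ≠ b i)).Nonempty := by
      by_contra h
      rw [not_nonempty_iff_eq_empty, filter_eq_empty_iff] at h
      have heqlt : ∀ i : Fin m, i < l → a i = b i := by
        intro i hi
        by_contra hne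
        exact h (mem_univ i) ⟨hi, hne⟩
      have hnm : l ∉ prefSet m l.val := by simp [mem_prefSet]
      have h1 := hmaj (l.val + 1)
      rw [prefSet_succ_eq_insert, sum_insert hnm, sum_insert hnm] at h1
      have h2 : ∑ i ∈ prefSet m l.val, a i = ∑ i ∈ prefSet m l.val, b i :=
        sum_congr rfl (fun i hi => heqlt i (Fin.lt_def.2 (mem_prefSet.1 hi)))
      rw [h2] at h1
      linarith
    set j := (univ.filter (fun i => i < l ∧ a i ≠ b i)).max' hJ with hjdef
    have hjprop := (mem_filter.1 ((univ.filter (fun i => i < l ∧ a i ≠ b i)).max'_mem hJ)).2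
    have hjl : j < l := hjprop.1
    have hjne : a j ≠ b j := hjprop.2
    have hjmax : ∀ i, i < l → a i ≠ b i → i ≤ j := fun i h1 h2 =>
      le_max' _ i (mem_filter.2 ⟨mem_univ i, h1, h2⟩)
    have hjb : b j < a j := by
      rcases lt_or_gt_of_ne hjne with h | h
      · exact absurd (hlmin j h) (not_le.2 hjl)
      · exact h
    have hbetween : ∀ i, j < i → i < l → a i = b i := by
      intro i h1 h2
      by_contra hne
      exact absurd (hjmax i h2 hne) (not_le.2 h1)
    have hjlne : j ≠ l := ne_of_lt hjl
    have hblj : b l ≤ b j := hbA hjl.le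
    have hal : a l < a j := by linarith
    -- the transfer amount
    set δ := min (a j - b j) (b l - a l) with hδdef
    have hδ1 : δ ≤ a j - b j := min_le_left _ _
    have hδ2 : δ ≤ b l - a l := min_le_right _ _
    have hδpos : 0 < δ := lt_min (by linarith) (by linarith)
    have hδal : δ ≤ a j - a l := by
      rcases min_le_iff.1 (le_refl δ) with h | h <;> linarith
    set lam := δ / (a j - a l) with hlamdef
    have halne : a j - a l ≠ 0 := by linarith
    have hlam0 : 0 ≤ lam := div_nonneg hδpos.le (by linarith)
    have hlam1 : lam ≤ 1 := (div_le_one (by linarith)).2 hδal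
    have hlamδ : lam * (a j - a l) = δ := div_mul_cancel₀ δ halne
    -- the T-transform
    set σ := Equiv.swap j l with hσdef
    have hσj : σ j = l := Equiv.swap_apply_left j l
    have hσl : σ l = j := Equiv.swap_apply_right j l
    have hσk : ∀ k, k ≠ j → k ≠ l → σ k = k := fun k h1 h2 => Equiv.swap_apply_of_ne_of_ne h1 h2
    set T : Matrix (Fin m) (Fin m) ℝ :=
      (1 - lam) • (1 : Matrix (Fin m) (Fin m) ℝ) + lam • permMat σ with hTdef
    have hTds : IsDS T := IsDS.combo IsDS.one (permMat_isDS σ) hlam0 hlam1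
    set a' : Fin m → ℝ := fun k => (1 - lam) * a k + lam * a (σ k) with ha'def
    have hvecT : Matrix.vecMul a T = a' := by
      rw [hTdef, Matrix.vecMul_add, vecMul_smulMat, vecMul_smulMat, Matrix.vecMul_one,
        vecMul_permMat]
      funext k
      simp only [Pi.add_apply, Pi.smul_apply, smul_eq_mul, Function.comp_apply, Equiv.symm_swap,
        ha'def, hσdef]
    have ha'j : a' j = a j - δ := by
      have h0 : a' j = (1 - lam) * a j + lam * a l := by rw [ha'def]; simp only [hσj]
      rw [h0]
      linear_combination -hlamδ
    have ha'l : a' l = a l + δ := by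
      have h0 : a' l = (1 - lam) * a l + lam * a j := by rw [ha'def]; simp only [hσl]
      rw [h0]
      linear_combination hlamδ
    have ha'k : ∀ k, k ≠ j → k ≠ l → a' k = a k := by
      intro k h1 h2
      have h0 : a' k = (1 - lam) * a k + lam * a k := by rw [ha'def]; simp only [hσk k h1 h2]
      rw [h0]; ring
    have ha'0 : ∀ i, 0 ≤ a' i := by
      intro i
      rcases eq_or_ne i j with rfl | h1
      · rw [ha'j]; linarith [hb0 j]
      rcases eq_or_ne i l with rfl | h2
      · rw [ha'l]; linarith [ha0 l]
      · rw [ha'k i h1 h2]; exact ha0 i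
    have ha'A : Antitone a' := by
      intro x y hxy
      rcases eq_or_ne x j with rfl | hxj
      · rcases eq_or_ne y j with rfl | hyj
        · exact le_refl _
        rcases eq_or_ne y l with rfl | hyl
        · rw [ha'j, ha'l]; linarith
        · rw [ha'j, ha'k y hyj hyl]
          have hjy : j < y := lt_of_le_of_ne hxy (Ne.symm hyj)
          rcases lt_or_ge y l with h' | h'
          · have e1 := hbetween y hjy h'
            have e2 : b y ≤ b j := hbA hjy.le
            linarith
          · have hay : a y ≤ a l := haA h'
            linarith
      rcases eq_or_ne x l with rfl | hxl
      · rcases eq_or_ne y j with rfl | hyj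
        · exact absurd (lt_of_lt_of_le hjl hxy) (lt_irrefl _)
        rcases eq_or_ne y l with rfl | hyl
        · exact le_refl _
        · rw [ha'l, ha'k y hyj hyl]
          have h1 : a y ≤ a l := haA hxy
          linarith
      · rw [ha'k x hxj hxl]
        rcases eq_or_ne y j with rfl | hyj
        · rw [ha'j]
          have h1 : a j ≤ a x := haA hxy
          linarith
        rcases eq_or_ne y l with rfl | hyl
        · rw [ha'l]
          rcases lt_or_ge x j with h' | h'
          · have hax : a j ≤ a x := haA h'.le
            linarith
          · have hjx : j < x := lt_of_le_of_ne h' (Ne.symm hxj)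
            have hxly : x < l := lt_of_le_of_ne hxy hxl
            have e1 := hbetween x hjx hxly
            have e2 : b l ≤ b x := hbA hxy
            linarith
        · rw [ha'k y hyj hyl]; exact haA hxy
    have hsum' : ∑ i, a' i = ∑ i, b i := by
      have h1 : ∑ i, a (σ i) = ∑ i, a i := Equiv.sum_comp σ a
      calc ∑ i, a' i = ∑ i, ((1 - lam) * a i + lam * a (σ i)) := rfl
        _ = (1 - lam) * ∑ i, a i + lam * ∑ i, a (σ i) := by
            rw [sum_add_distrib, mul_sum, mul_sum]
        _ = ∑ i, a i := by rw [h1]; ring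
        _ = ∑ i, b i := hsum
    have hdiff : ∀ P : Finset (Fin m), ∑ i ∈ P, a' i =
        ∑ i ∈ P, a i + (if l ∈ P then δ else 0) - (if j ∈ P then δ else 0) := by
      intro P
      have h1 : ∑ i ∈ P, a' i - ∑ i ∈ P, a i = ∑ i ∈ P, (a' i - a i) := by rw [sum_sub_distrib]
      have h2 : ∑ i ∈ P, (a' i - a i) = ∑ i ∈ P ∩ {j, l}, (a' i - a i) := by
        refine (sum_subset inter_subset_left ?_).symm
        intro i hiP hni
        have hij : i ≠ j := fun h => hni (mem_inter.2 ⟨hiP, by simp [h]⟩)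
        have hil : i ≠ l := fun h => hni (mem_inter.2 ⟨hiP, by simp [h]⟩)
        rw [ha'k i hij hil, sub_self]
      rcases em (j ∈ P) with hjP | hjP <;> rcases em (l ∈ P) with hlP | hlP
      · have hPe : P ∩ {j, l} = {j, l} := by
          ext i
          simp only [mem_inter, mem_insert, mem_singleton]
          constructor
          · rintro ⟨hiP, h⟩; exact h
          · rintro (rfl | rfl)
            · exact ⟨hjP, Or.inl rfl⟩
            · exact ⟨hlP, Or.inr rfl⟩
        rw [hPe, sum_pair hjlne] at h2
        rw [if_pos hjP, if_pos hlP]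
        rw [ha'j, ha'l] at h2
        linarith [h1, h2]
      · have hPe : P ∩ {j, l} = {j} := by
          ext i
          simp only [mem_inter, mem_insert, mem_singleton]
          constructor
          · rintro ⟨hiP, rfl | rfl⟩
            · rfl
            · exact absurd hiP hlP
          · rintro rfl; exact ⟨hjP, Or.inl rfl⟩
        rw [hPe, sum_singleton] at h2
        rw [if_pos hjP, if_neg hlP]
        rw [ha'j] at h2
        linarith [h1, h2]
      · have hPe : P ∩ {j, l} = {l} := by
          ext i
          simp only [mem_inter, mem_insert, mem_singleton]
          constructor
          · rintro ⟨hiP, rfl | rfl⟩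
            · exact absurd hiP hjP
            · rfl
          · rintro rfl; exact ⟨hlP, Or.inr rfl⟩
        rw [hPe, sum_singleton] at h2
        rw [if_neg hjP, if_pos hlP]
        rw [ha'l] at h2
        linarith [h1, h2]
      · have hPe : P ∩ {j, l} = ∅ := by
          ext i
          simp only [mem_inter, mem_insert, mem_singleton, notMem_empty, iff_false]
          rintro ⟨hiP, rfl | rfl⟩
          · exact hjP hiP
          · exact hlP hiP
        rw [hPe, sum_empty] at h2
        rw [if_neg hjP, if_neg hlP]
        linarith [h1, h2]
    have hmaj' : ∀ k : ℕ, ∑ i ∈ prefSet m k, b i ≤ ∑ i ∈ prefSet m k, a' i := by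
      intro k
      rw [hdiff]
      rcases em (j ∈ prefSet m k) with hjP | hjP
      · rcases em (l ∈ prefSet m k) with hlP | hlP
        · rw [if_pos hlP]; rw [if_pos hjP]; linarith [hmaj k]
        · rw [if_neg hlP]; rw [if_pos hjP]
          have hkj : j.val < k := mem_prefSet.1 hjP
          have hkl : k ≤ l.val := by
            by_contra h; push_neg at h; exact hlP (mem_prefSet.2 h)
          have hsub : prefSet m (j.val + 1) ⊆ prefSet m k := by
            intro i hi; rw [mem_prefSet] at *
            omega
          have hzero : ∀ i ∈ prefSet m k, i ∉ prefSet m (j.val + 1) → a i - b i = 0 := by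
            intro i h1 h2
            rw [mem_prefSet] at h1
            rw [mem_prefSet] at h2
            push_neg at h2
            have hji : j < i := by rw [Fin.lt_def]; omega
            have hil : i < l := by rw [Fin.lt_def]; omega
            rw [hbetween i hji hil, sub_self]
          have he : ∑ i ∈ prefSet m k, (a i - b i) = ∑ i ∈ prefSet m (j.val + 1), (a i - b i) :=
            (sum_subset hsub hzero).symm
          have hnotin : j ∉ prefSet m j.val := by simp [mem_prefSet]
          have h4 : ∑ i ∈ prefSet m (j.val + 1), (a i - b i)
              = (a j - b j) + ∑ i ∈ prefSet m j.val, (a i - b i) := by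
            rw [prefSet_succ_eq_insert, sum_insert hnotin]
          have h5 : 0 ≤ ∑ i ∈ prefSet m j.val, (a i - b i) := by
            rw [sum_sub_distrib]; linarith [hmaj j.val]
          have h6 : ∑ i ∈ prefSet m k, a i - ∑ i ∈ prefSet m k, b i
              = ∑ i ∈ prefSet m k, (a i - b i) := by rw [sum_sub_distrib]
          linarith [he, h4, h5, h6]
      · have hlP : l ∉ prefSet m k := by
          intro h
          apply hjP
          rw [mem_prefSet] at *
          have := Fin.lt_def.1 hjl
          omega
        rw [if_neg hlP]; rw [if_neg hjP]; linarith [hmaj k]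
    have hjmem : j ∈ univ.filter (fun i => a i ≠ b i) := mem_filter.2 ⟨mem_univ _, hjne⟩
    have hlmem : l ∈ univ.filter (fun i => a i ≠ b i) := mem_filter.2 ⟨mem_univ _, ne_of_lt hl⟩
    have hcard : (univ.filter (fun i => a' i ≠ b i)).card ≤ d := by
      rcases min_cases (a j - b j) (b l - a l) with ⟨hmin, _⟩ | ⟨hmin, _⟩
      · -- δ = a j - b j : index j gets fixed
        have hsub : univ.filter (fun i => a' i ≠ b i) ⊆ (univ.filter (fun i => a i ≠ b i)).erase j := by
          intro i hi
          rw [mem_filter] at hi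
          rcases eq_or_ne i j with rfl | hij
          · exfalso; apply hi.2; rw [ha'j, hδdef, hmin]; ring
          rcases eq_or_ne i l with rfl | hil
          · exact mem_erase.2 ⟨hij, mem_filter.2 ⟨mem_univ _, ne_of_lt hl⟩⟩
          · refine mem_erase.2 ⟨hij, mem_filter.2 ⟨mem_univ _, ?_⟩⟩
            rw [← ha'k i hij hil]; exact hi.2
        have := card_le_card hsub
        rw [card_erase_of_mem hjmem] at this
        omega
      · -- δ = b l - a l : index l gets fixed
        have hsub : univ.filter (fun i => a' i ≠ b i) ⊆ (univ.filter (fun i => a i ≠ b i)).erase l := by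
          intro i hi
          rw [mem_filter] at hi
          rcases eq_or_ne i l with rfl | hil
          · exfalso; apply hi.2; rw [ha'l, hδdef, hmin]; ring
          rcases eq_or_ne i j with rfl | hij
          · exact mem_erase.2 ⟨hil, mem_filter.2 ⟨mem_univ _, hjne⟩⟩
          · refine mem_erase.2 ⟨hil, mem_filter.2 ⟨mem_univ _, ?_⟩⟩
            rw [← ha'k i hij hil]; exact hi.2
        have := card_le_card hsub
        rw [card_erase_of_mem hlmem] at this
        omega
    obtain ⟨B', hB', hv'⟩ := ih a' ha'0 ha'A hsum' hmaj' hcard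
    refine ⟨T * B', hTds.mul hB', ?_⟩
    rw [← Matrix.vecMul_vecMul, hvecT, hv']

lemma padded_nonneg {n m : ℕ} {p : Fin n → ℝ} {phat : Fin m → ℝ}
    (hp0 : ∀ i, 0 ≤ p i) (hps : IsPaddedSupport p phat) : ∀ j, 0 ≤ phat j := by
  obtain ⟨f, hmono, hval, hzero⟩ := hps
  intro j
  rcases em (∃ i, f i = j) with ⟨i, rfl⟩ | h
  · rw [hval i]; exact hp0 i.1
  · push_neg at h
    rw [hzero j h]

lemma padded_sum_le {n m : ℕ} {p : Fin n → ℝ} {phat : Fin m → ℝ} (k : ℕ)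
    (hps : IsPaddedSupport p phat) : maxPartialSum phat k ≤ maxPartialSum p k := by
  classical
  obtain ⟨f, hmono, hval, hzero⟩ := hps
  have hfinj : Function.Injective f := hmono.injective
  obtain ⟨s, hs, hsum⟩ := mps_exists phat k
  rw [← hsum]
  set A : Finset {i : Fin n // p i ≠ 0} := univ.filter (fun i => f i ∈ s) with hA
  have h1 : ∑ j ∈ s, phat j = ∑ j ∈ s.filter (fun j => ∃ i, f i = j), phat j := by
    refine (sum_subset (filter_subset _ _) ?_).symm
    intro j hj hnj
    rw [mem_filter] at hnj
    push_neg at hnj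
    exact hzero j (hnj hj)
  have h2 : s.filter (fun j => ∃ i, f i = j) = A.image f := by
    ext j
    simp only [mem_filter, mem_image, hA]
    constructor
    · rintro ⟨hj, i, rfl⟩
      exact ⟨i, ⟨mem_univ _, hj⟩, rfl⟩
    · rintro ⟨i, hi, rfl⟩
      exact ⟨hi.2, i, rfl⟩
  have h3 : ∑ j ∈ A.image f, phat j = ∑ i ∈ A, p i.1 := by
    rw [sum_image (fun a _ b _ h => hfinj h)]
    exact sum_congr rfl fun i _ => hval i
  have h4 : ∑ i ∈ A, p i.1 = ∑ j ∈ A.image (fun i => i.1), p j :=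
    (sum_image (fun a _ b _ h => Subtype.ext h)).symm
  have hcard : (A.image (fun i => i.1)).card ≤ k := by
    rw [card_image_of_injective _ (fun a b h => Subtype.ext h)]
    calc A.card = (A.image f).card := (card_image_of_injective _ hfinj).symm
    _ = (s.filter (fun j => ∃ i, f i = j)).card := by rw [h2]
    _ ≤ s.card := card_le_card (filter_subset _ _)
    _ ≤ k := hs
  rw [h1, h2, h3, h4]
  exact le_mps p hcard

lemma le_padded_sum {n m : ℕ} {p : Fin n → ℝ} {phat : Fin m → ℝ} (k : ℕ)
    (hps : IsPaddedSupport p phat) : maxPartialSum p k ≤ maxPartialSum phat k := by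
  classical
  obtain ⟨f, hmono, hval, hzero⟩ := hps
  have hfinj : Function.Injective f := hmono.injective
  obtain ⟨s, hs, hsum⟩ := mps_exists p k
  rw [← hsum]
  set A : Finset {i : Fin n // p i ≠ 0} := univ.filter (fun i => i.1 ∈ s) with hA
  have h1 : ∑ i ∈ s, p i = ∑ i ∈ s.filter (fun i => p i ≠ 0), p i := by
    refine (sum_subset (filter_subset _ _) ?_).symm
    intro i hi hni
    rw [mem_filter] at hni
    push_neg at hni
    exact hni hi
  have h2 : s.filter (fun i => p i ≠ 0) = A.image (fun i => i.1) := by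
    ext i
    simp only [mem_filter, mem_image, hA]
    constructor
    · rintro ⟨hi, hne⟩
      exact ⟨⟨i, hne⟩, ⟨mem_univ _, hi⟩, rfl⟩
    · rintro ⟨i', hi', rfl⟩
      exact ⟨hi'.2, i'.2⟩
  have h3 : ∑ i ∈ A.image (fun i => i.1), p i = ∑ i ∈ A, p i.1 :=
    sum_image (fun a _ b _ h => Subtype.ext h)
  have h4 : ∑ i ∈ A, p i.1 = ∑ j ∈ A.image f, phat j := by
    rw [sum_image (fun a _ b _ h => hfinj h)]
    exact sum_congr rfl fun i _ => (hval i).symm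
  have hcard : (A.image f).card ≤ k := by
    rw [card_image_of_injective _ hfinj]
    calc A.card = (A.image (fun i => i.1)).card :=
          (card_image_of_injective _ (fun a b h => Subtype.ext h)).symm
    _ = (s.filter (fun i => p i ≠ 0)).card := by rw [h2]
    _ ≤ s.card := card_le_card (filter_subset _ _)
    _ ≤ k := hs
  rw [h1, h2, h3, h4]
  exact le_mps phat hcard

lemma mps_total {m : ℕ} (v : Fin m → ℝ) (hv : ∀ i, 0 ≤ v i) {k : ℕ} (hk : m ≤ k) :
    maxPartialSum v k = ∑ i, v i := by
  refine le_antisymm ?_ (le_mps v (by rw [card_univ, Fintype.card_fin]; exact hk))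
  obtain ⟨s, hs, hsum⟩ := mps_exists v k
  rw [← hsum]
  exact sum_le_sum_of_subset_of_nonneg (subset_univ s) (fun i _ _ => hv i)

lemma exists_antitone_perm {m : ℕ} (v : Fin m → ℝ) :
    ∃ σ : Equiv.Perm (Fin m), Antitone (v ∘ σ) := by
  obtain σ := Tuple.sort (fun i => -v i)
  refine ⟨Tuple.sort (fun i => -v i), ?_⟩
  intro x y hxy
  have := Tuple.monotone_sort (fun i => -v i) hxy
  simp only [Function.comp_apply] at this ⊢
  linarith

lemma exists_padded {n m : ℕ} (p : Fin n → ℝ)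
    (hcm : (univ.filter (fun i => p i ≠ 0)).card ≤ m) :
    ∃ phat : Fin m → ℝ, IsPaddedSupport p phat := by
  classical
  set S := univ.filter (fun i : Fin n => p i ≠ 0) with hS
  set e := S.orderIsoOfFin rfl with hedef
  have hmem : ∀ i : {i : Fin n // p i ≠ 0}, i.1 ∈ S := fun i =>
    mem_filter.2 ⟨mem_univ _, i.2⟩
  refine ⟨fun j => if h : (j : ℕ) < S.card then p (e ⟨(j : ℕ), h⟩).1 else 0,
    fun i => Fin.castLE hcm (e.symm ⟨i.1, hmem i⟩), ?_, ?_, ?_⟩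
  · intro i i' hii
    have h1 : i.1 < i'.1 := hii
    have h2 : (⟨i.1, hmem i⟩ : {x // x ∈ S}) < ⟨i'.1, hmem i'⟩ := Subtype.mk_lt_mk.2 h1
    have h3 : e.symm ⟨i.1, hmem i⟩ < e.symm ⟨i'.1, hmem i'⟩ := e.symm.strictMono h2
    rw [Fin.lt_def, Fin.coe_castLE, Fin.coe_castLE]
    exact h3
  · intro i
    have hlt : ((Fin.castLE hcm (e.symm ⟨i.1, hmem i⟩) : Fin m) : ℕ) < S.card := by
      rw [Fin.coe_castLE]
      exact (e.symm ⟨i.1, hmem i⟩).isLt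
    beta_reduce
    rw [dif_pos hlt]
    have hfin : (⟨((Fin.castLE hcm (e.symm ⟨i.1, hmem i⟩) : Fin m) : ℕ), hlt⟩ : Fin S.card)
        = e.symm ⟨i.1, hmem i⟩ := Fin.ext rfl
    rw [hfin, OrderIso.apply_symm_apply]
  · intro j hj
    rcases Nat.lt_or_ge (j : ℕ) S.card with h | h
    · exfalso
      set x := e ⟨(j : ℕ), h⟩ with hx
      have hne : p x.1 ≠ 0 := (mem_filter.1 x.2).2
      apply hj ⟨x.1, hne⟩
      beta_reduce
      have h1 : (⟨x.1, hmem ⟨x.1, hne⟩⟩ : {y // y ∈ S}) = x := Subtype.ext rfl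
      rw [h1, hx, OrderIso.symm_apply_apply]
      exact Fin.ext rfl
    · beta_reduce
      rw [dif_neg (not_lt.2 h)]

/-- `p ≽ q` iff `p` has support of size at most `m` and some `m × m`
doubly stochastic matrix `B` maps the padded vector `p̂` to `q`. -/
theorem stmt0 {n m : ℕ} (p : Fin n → ℝ) (q : Fin m → ℝ)
    (hp : IsProbVec p) (hq : IsProbVec q) :
    Majorizes p q ↔
      ((Finset.univ.filter (fun i => p i ≠ 0)).card ≤ m ∧
        ∃ phat : Fin m → ℝ, IsPaddedSupport p phat ∧
          ∃ B : Matrix (Fin m) (Fin m) ℝ, (∀ i j, 0 ≤ B i j) ∧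
            (∀ i, ∑ j, B i j = 1) ∧ (∀ j, ∑ i, B i j = 1) ∧
            Matrix.vecMul phat B = q) := by
  classical
  constructor
  · intro hmaj
    have hq1 : maxPartialSum q m = 1 := by
      rw [mps_total q hq.1 (le_refl m), hq.2]
    have hsupp : (Finset.univ.filter (fun i => p i ≠ 0)).card ≤ m := by
      by_contra hcon
      push_neg at hcon
      obtain ⟨s, hs, hsum⟩ := mps_exists p m
      have hnsub : ¬ (Finset.univ.filter (fun i => p i ≠ 0)) ⊆ s := by
        intro hsub
        have := card_le_card hsub
        omega
      obtain ⟨i₀, hi₀supp, hi₀s⟩ := not_subset.1 hnsub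
      have hp0 : 0 < p i₀ := lt_of_le_of_ne (hp.1 i₀) (Ne.symm (mem_filter.1 hi₀supp).2)
      have h1 : ∑ i ∈ insert i₀ s, p i ≤ 1 := by
        rw [← hp.2]
        exact sum_le_sum_of_subset_of_nonneg (subset_univ _) (fun i _ _ => hp.1 i)
      rw [sum_insert hi₀s] at h1
      have h2 := hmaj m
      rw [hq1, ← hsum] at h2
      linarith
    obtain ⟨phat, hps⟩ := exists_padded p hsupp
    have hphat0 := padded_nonneg hp.1 hps
    have hmpseq : ∀ k, maxPartialSum phat k = maxPartialSum p k := fun k =>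
      le_antisymm (padded_sum_le k hps) (le_padded_sum k hps)
    have hsum_phat : ∑ j, phat j = 1 := by
      have h1 : maxPartialSum phat (n + m) = ∑ j, phat j :=
        mps_total phat hphat0 (Nat.le_add_left m n)
      have h2 : maxPartialSum p (n + m) = ∑ i, p i := mps_total p hp.1 (Nat.le_add_right n m)
      rw [← h1, hmpseq, h2, hp.2]
    obtain ⟨σ₁, hσ₁⟩ := exists_antitone_perm phat
    obtain ⟨σ₂, hσ₂⟩ := exists_antitone_perm q
    set a := phat ∘ σ₁ with hadef
    set b := q ∘ σ₂ with hbdef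
    have ha0 : ∀ i, 0 ≤ a i := fun i => hphat0 _
    have hb0 : ∀ i, 0 ≤ b i := fun i => hq.1 _
    have hsab : ∑ i, a i = ∑ i, b i := by
      have h1 : ∑ i, a i = ∑ i, phat i := Equiv.sum_comp σ₁ phat
      have h2 : ∑ i, b i = ∑ i, q i := Equiv.sum_comp σ₂ q
      rw [h1, h2, hsum_phat, hq.2]
    have hmaj' : ∀ k : ℕ, ∑ i ∈ prefSet m k, b i ≤ ∑ i ∈ prefSet m k, a i := by
      intro k
      rw [← mps_antitone b hb0 hσ₂, ← mps_antitone a ha0 hσ₁]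
      calc maxPartialSum b k = maxPartialSum q k := mps_perm q σ₂
      _ ≤ maxPartialSum p k := hmaj k
      _ = maxPartialSum phat k := (hmpseq k).symm
      _ = maxPartialSum a k := (mps_perm phat σ₁).symm
    obtain ⟨B₀, hB₀, hv₀⟩ := hlp_sorted (univ.filter (fun i => a i ≠ b i)).card a b
      ha0 hb0 hσ₁ hσ₂ hsab hmaj' (le_refl _)
    have hds : IsDS (permMat σ₁⁻¹ * B₀ * permMat σ₂) :=
      ((permMat_isDS σ₁⁻¹).mul hB₀).mul (permMat_isDS σ₂)
    refine ⟨hsupp, phat, hps, permMat σ₁⁻¹ * B₀ * permMat σ₂, hds.1, hds.2.1, hds.2.2, ?_⟩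
    have e1 : Matrix.vecMul phat (permMat σ₁⁻¹) = a := by
      rw [vecMul_permMat]
      funext x
      have : Equiv.symm σ₁⁻¹ = σ₁ := Equiv.symm_symm σ₁
      rw [Function.comp_apply, this, hadef, Function.comp_apply]
    have e2 : Matrix.vecMul b (permMat σ₂) = q := by
      rw [vecMul_permMat]
      funext x
      simp [hbdef]
    rw [← Matrix.vecMul_vecMul, ← Matrix.vecMul_vecMul, e1, hv₀, e2]
  · rintro ⟨hsupp, phat, hps, B, hB0, hBr, hBc, hBq⟩
    intro k
    have hphat0 := padded_nonneg hp.1 hps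
    have step1 : maxPartialSum q k ≤ maxPartialSum phat k := by
      obtain ⟨s, hs, hsum⟩ := mps_exists q k
      rw [← hsum]
      have hq_eq : ∀ j, q j = ∑ i, phat i * B i j := by
        intro j
        rw [← hBq]
        rfl
      set c : Fin m → ℝ := fun i => ∑ j ∈ s, B i j with hcdef
      have hc0 : ∀ i, 0 ≤ c i := fun i => sum_nonneg fun j _ => hB0 i j
      have hc1 : ∀ i, c i ≤ 1 := by
        intro i
        rw [← hBr i]
        exact sum_le_sum_of_subset_of_nonneg (subset_univ s) (fun j _ _ => hB0 i j)
      have hck : ∑ i, c i ≤ (k : ℝ) := by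
        have : ∑ i, c i = ∑ j ∈ s, ∑ i, B i j := by
          rw [hcdef]
          exact sum_comm
        rw [this]
        have : ∑ j ∈ s, ∑ i, B i j = (s.card : ℝ) := by
          rw [sum_congr rfl fun j _ => hBc j, sum_const, nsmul_eq_mul, mul_one]
        rw [this]
        exact_mod_cast hs
      have hrw : ∑ j ∈ s, q j = ∑ i, c i * phat i := by
        calc ∑ j ∈ s, q j = ∑ j ∈ s, ∑ i, phat i * B i j := sum_congr rfl fun j _ => hq_eq j
        _ = ∑ i, ∑ j ∈ s, phat i * B i j := sum_comm
        _ = ∑ i, c i * phat i := by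
            refine sum_congr rfl fun i _ => ?_
            rw [hcdef, ← mul_sum]
            ring
      rw [hrw]
      exact sum_mul_le_mps phat c hphat0 hc0 hc1 hck
    exact le_trans step1 (padded_sum_le k hps)
end

section
/- Let 𝔻 be a monotone divergence. For p, q ∈ P(n) define λ_min(p,q) := Σ_{i∈supp(p)} q_i and λ_max(p,q) := min_{i∈supp(p)} q_i/p_i, and set 𝔻_min(p‖q) := 𝔻((1,0) ‖ (λ_min, 1−λ_min)) and 𝔻_max(p‖q) := 𝔻((1,0) ‖ (λ_max, 1−λ_max)). Then 𝔻_min and 𝔻_max are themselves monotone divergences, and for all n ∈ ℕ and all p, q ∈ P(n): 𝔻_min(p‖q) ≤ 𝔻(p‖q) ≤ 𝔻_max(p‖q). -/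
open scoped BigOperators ENNReal

/-- `λ_min(p,q) = Σ_{i ∈ supp(p)} q_i`. -/
noncomputable def lamMin {n : ℕ} (p q : Fin n → ℝ) : ℝ :=
  ∑ i ∈ Finset.univ.filter (fun i => p i ≠ 0), q i

/-- `λ_max(p,q) = min_{i ∈ supp(p)} q_i / p_i`. -/
noncomputable def lamMax {n : ℕ} (p q : Fin n → ℝ) : ℝ :=
  sInf { x | ∃ i, p i ≠ 0 ∧ x = q i / p i }

/-- `𝔻_min(p‖q) := 𝔻((1,0) ‖ (λ_min, 1 − λ_min))`. -/
noncomputable def DminOf (D : (n : ℕ) → (Fin n → ℝ) → (Fin n → ℝ) → ℝ≥0∞) :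
    (n : ℕ) → (Fin n → ℝ) → (Fin n → ℝ) → ℝ≥0∞ :=
  fun _ p q => D 2 ![1, 0] ![lamMin p q, 1 - lamMin p q]

/-- `𝔻_max(p‖q) := 𝔻((1,0) ‖ (λ_max, 1 − λ_max))`. -/
noncomputable def DmaxOf (D : (n : ℕ) → (Fin n → ℝ) → (Fin n → ℝ) → ℝ≥0∞) :
    (n : ℕ) → (Fin n → ℝ) → (Fin n → ℝ) → ℝ≥0∞ :=
  fun _ p q => D 2 ![1, 0] ![lamMax p q, 1 - lamMax p q]


section Aux

variable {n m : ℕ}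

lemma exists_ne_zero {p : Fin n → ℝ} (hp : IsProbVec p) : ∃ i, p i ≠ 0 := by
  by_contra h
  push_neg at h
  have h2 := hp.2
  simp only [h, Finset.sum_const_zero] at h2
  norm_num at h2

lemma probVec_e1 : IsProbVec ![(1:ℝ), 0] := by
  constructor
  · intro i; fin_cases i <;> norm_num
  · simp [Fin.sum_univ_two]

lemma probVec_pair {l : ℝ} (h0 : 0 ≤ l) (h1 : l ≤ 1) : IsProbVec ![l, 1 - l] := by
  constructor
  · intro i; fin_cases i <;> simp <;> linarith
  · simp [Fin.sum_univ_two]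

lemma lamMin_nonneg {p q : Fin n → ℝ} (hq : IsProbVec q) : 0 ≤ lamMin p q :=
  Finset.sum_nonneg fun i _ => hq.1 i

lemma lamMin_le_one {p q : Fin n → ℝ} (hq : IsProbVec q) : lamMin p q ≤ 1 := by
  rw [← hq.2]
  exact Finset.sum_le_sum_of_subset_of_nonneg (Finset.filter_subset _ _)
    (fun i _ _ => hq.1 i)

lemma lamMaxSet_finite (p q : Fin n → ℝ) :
    {x | ∃ i, p i ≠ 0 ∧ x = q i / p i}.Finite :=
  Set.Finite.subset (Set.finite_range fun i => q i / p i)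
    (by rintro x ⟨i, -, rfl⟩; exact ⟨i, rfl⟩)

lemma lamMaxSet_nonempty {p : Fin n → ℝ} (q : Fin n → ℝ) (hp : IsProbVec p) :
    {x | ∃ i, p i ≠ 0 ∧ x = q i / p i}.Nonempty := by
  obtain ⟨i, hi⟩ := exists_ne_zero hp
  exact ⟨q i / p i, i, hi, rfl⟩

lemma lamMax_mem {p q : Fin n → ℝ} (hp : IsProbVec p) :
    ∃ i, p i ≠ 0 ∧ lamMax p q = q i / p i :=
  (lamMaxSet_nonempty q hp).csInf_mem (lamMaxSet_finite p q)

lemma lamMax_le {p q : Fin n → ℝ} {i : Fin n} (hi : p i ≠ 0) :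
    lamMax p q ≤ q i / p i :=
  csInf_le (lamMaxSet_finite p q).bddBelow ⟨i, hi, rfl⟩

lemma lamMax_nonneg {p q : Fin n → ℝ} (hp : IsProbVec p) (hq : IsProbVec q) :
    0 ≤ lamMax p q := by
  obtain ⟨i, hi, heq⟩ := lamMax_mem (q := q) hp
  rw [heq]
  exact div_nonneg (hq.1 i) (hp.1 i)

lemma lamMax_le_one {p q : Fin n → ℝ} (hp : IsProbVec p) (hq : IsProbVec q) :
    lamMax p q ≤ 1 := by
  have hex : ∃ i, p i ≠ 0 ∧ q i ≤ p i := by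
    by_contra h
    push_neg at h
    have hlt : ∑ i ∈ Finset.univ.filter (fun i => p i ≠ 0), p i
        < ∑ i ∈ Finset.univ.filter (fun i => p i ≠ 0), q i := by
      apply Finset.sum_lt_sum_of_nonempty
      · obtain ⟨i, hi⟩ := exists_ne_zero hp
        exact ⟨i, Finset.mem_filter.2 ⟨Finset.mem_univ i, hi⟩⟩
      · intro i hi
        exact h i (Finset.mem_filter.1 hi).2
    have h1 : ∑ i ∈ Finset.univ.filter (fun i => p i ≠ 0), p i = 1 := by
      rw [Finset.sum_filter_ne_zero, hp.2]
    have h2 : ∑ i ∈ Finset.univ.filter (fun i => p i ≠ 0), q i ≤ 1 := by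
      rw [← hq.2]
      exact Finset.sum_le_sum_of_subset_of_nonneg (Finset.filter_subset _ _)
        (fun i _ _ => hq.1 i)
    linarith
  obtain ⟨i, hi, hle⟩ := hex
  have hpi : 0 < p i := lt_of_le_of_ne (hp.1 i) (Ne.symm hi)
  calc lamMax p q ≤ q i / p i := lamMax_le hi
    _ ≤ 1 := (div_le_one hpi).2 hle

lemma lamMax_mul_le {p q : Fin n → ℝ} (hp : IsProbVec p) (hq : IsProbVec q) (i : Fin n) :
    lamMax p q * p i ≤ q i := by
  by_cases hi : p i = 0
  · rw [hi, mul_zero]; exact hq.1 i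
  · have hpi : 0 < p i := lt_of_le_of_ne (hp.1 i) (Ne.symm hi)
    exact (le_div_iff₀ hpi).1 (lamMax_le hi)

lemma relMaj_refl (p q : Fin n → ℝ) : RelMaj p q p q := by
  refine ⟨1, ⟨?_, ?_⟩, Matrix.vecMul_one p, Matrix.vecMul_one q⟩
  · intro i j
    by_cases h : i = j <;> simp [Matrix.one_apply, h]
  · intro i
    simp [Matrix.one_apply]

lemma relMaj_pair {a b : ℝ} (h0 : 0 ≤ a) (hab : a ≤ b) (h1 : b ≤ 1) :
    RelMaj ![1, 0] ![a, 1 - a] ![1, 0] ![b, 1 - b] := by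
  by_cases ha : a = 1
  · have hb : b = 1 := le_antisymm h1 (ha ▸ hab)
    rw [ha, hb]
    exact relMaj_refl _ _
  · have h1a : 0 < 1 - a := by
      have : a < 1 := lt_of_le_of_ne (hab.trans h1) ha
      linarith
    set c : ℝ := (b - a) / (1 - a) with hc
    have hc0 : 0 ≤ c := div_nonneg (by linarith) h1a.le
    have hc1 : c ≤ 1 := (div_le_one h1a).2 (by linarith)
    refine ⟨![![1, 0], ![c, 1 - c]], ⟨?_, ?_⟩, ?_, ?_⟩
    · intro i j
      fin_cases i <;> fin_cases j <;> simp <;> linarith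
    · intro i
      fin_cases i <;> simp [Fin.sum_univ_two]
    · ext j
      fin_cases j <;> simp [Matrix.vecMul, dotProduct, Fin.sum_univ_two]
    · ext j
      have key0 : a * 1 + (1 - a) * c = b := by
        rw [hc]; field_simp; ring
      have key1 : a * 0 + (1 - a) * (1 - c) = 1 - b := by
        rw [hc]; field_simp; ring
      fin_cases j <;>
        simp [Matrix.vecMul, dotProduct, Fin.sum_univ_two] <;>
        linarith [key0, key1]
    
lemma D_pair_mono {D : (n : ℕ) → (Fin n → ℝ) → (Fin n → ℝ) → ℝ≥0∞}
    (hD : IsMonotoneDivergence D) {a b : ℝ} (h0 : 0 ≤ a) (hab : a ≤ b) (h1 : b ≤ 1) :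
    D 2 ![1, 0] ![b, 1 - b] ≤ D 2 ![1, 0] ![a, 1 - a] :=
  hD.dpi _ _ _ _ probVec_e1 (probVec_pair h0 (hab.trans h1)) probVec_e1
    (probVec_pair (h0.trans hab) h1) (relMaj_pair h0 hab h1)

lemma vecMul_apply {p : Fin n → ℝ} {W : Matrix (Fin n) (Fin m) ℝ} (j : Fin m) :
    Matrix.vecMul p W j = ∑ i, p i * W i j := rfl

lemma lamMin_mono {p q : Fin n → ℝ} {p' q' : Fin m → ℝ}
    (hp : IsProbVec p) (hq : IsProbVec q) (hp' : IsProbVec p')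
    (h : RelMaj p q p' q') : lamMin p q ≤ lamMin p' q' := by
  obtain ⟨W, ⟨hW0, hW1⟩, hpW, hqW⟩ := h
  set s' := Finset.univ.filter (fun j => p' j ≠ 0) with hs'
  set T : Fin n → ℝ := fun i => ∑ j ∈ s', W i j with hT
  have hT1 : ∀ i, T i ≤ 1 := fun i =>
    le_of_le_of_eq (Finset.sum_le_sum_of_subset_of_nonneg (Finset.subset_univ _)
      (fun j _ _ => hW0 i j)) (hW1 i)
  have hT0 : ∀ i, 0 ≤ T i := fun i => Finset.sum_nonneg fun j _ => hW0 i j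
  have hswap : ∀ v : Fin n → ℝ, ∑ i, v i * T i = ∑ j ∈ s', Matrix.vecMul v W j := by
    intro v
    simp only [hT, Finset.mul_sum, vecMul_apply]
    rw [Finset.sum_comm]
  have hsum : ∑ i, p i * T i = 1 := by
    rw [hswap, hpW, hs', Finset.sum_filter_ne_zero, hp'.2]
  have hTone : ∀ i, p i ≠ 0 → T i = 1 := by
    have hz : ∑ i, p i * (1 - T i) = 0 := by
      have : ∑ i, p i * (1 - T i) = (∑ i, p i) - ∑ i, p i * T i := by
        rw [← Finset.sum_sub_distrib]
        congr 1; ext i; ring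
      rw [this, hp.2, hsum, sub_self]
    intro i hi
    have := (Finset.sum_eq_zero_iff_of_nonneg
      (fun i _ => mul_nonneg (hp.1 i) (by linarith [hT1 i]))).1 hz i (Finset.mem_univ i)
    have h2 : 1 - T i = 0 := by
      rcases mul_eq_zero.1 this with h | h
      · exact absurd h hi
      · exact h
    linarith
  calc lamMin p q = ∑ i ∈ Finset.univ.filter (fun i => p i ≠ 0), q i * T i := by
        apply Finset.sum_congr rfl
        intro i hi
        rw [hTone i (Finset.mem_filter.1 hi).2, mul_one]
    _ ≤ ∑ i, q i * T i :=
        Finset.sum_le_sum_of_subset_of_nonneg (Finset.filter_subset _ _)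
          (fun i _ _ => mul_nonneg (hq.1 i) (hT0 i))
    _ = ∑ j ∈ s', Matrix.vecMul q W j := hswap q
    _ = lamMin p' q' := by rw [hqW]; rfl

lemma lamMax_mono {p q : Fin n → ℝ} {p' q' : Fin m → ℝ}
    (hp : IsProbVec p) (hq : IsProbVec q) (hp' : IsProbVec p')
    (h : RelMaj p q p' q') : lamMax p q ≤ lamMax p' q' := by
  obtain ⟨W, ⟨hW0, hW1⟩, hpW, hqW⟩ := h
  apply le_csInf (lamMaxSet_nonempty q' hp')
  rintro x ⟨j, hj, rfl⟩
  have hpj : 0 < p' j := lt_of_le_of_ne (hp'.1 j) (Ne.symm hj)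
  rw [le_div_iff₀ hpj]
  rw [← hpW, ← hqW, vecMul_apply, vecMul_apply, Finset.mul_sum]
  apply Finset.sum_le_sum
  intro i _
  calc lamMax p q * (p i * W i j) = (lamMax p q * p i) * W i j := by ring
    _ ≤ q i * W i j := mul_le_mul_of_nonneg_right (lamMax_mul_le hp hq i) (hW0 i j)

lemma relMaj_to_min {p q : Fin n → ℝ} (hp : IsProbVec p) (hq : IsProbVec q) :
    RelMaj p q ![1, 0] ![lamMin p q, 1 - lamMin p q] := by
  set W : Matrix (Fin n) (Fin 2) ℝ := fun i => if p i = 0 then ![0, 1] else ![1, 0] with hW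
  have hW0 : ∀ i j, 0 ≤ W i j := by
    intro i j
    rw [hW]
    by_cases h : p i = 0 <;> fin_cases j <;> simp [h]
  have hW1 : ∀ i, ∑ j, W i j = 1 := by
    intro i
    rw [hW]
    by_cases h : p i = 0 <;> simp [h, Fin.sum_univ_two]
  have hWsimp0 : ∀ i, W i 0 = if p i = 0 then 0 else 1 := by
    intro i; rw [hW]; by_cases h : p i = 0 <;> simp [h]
  have hWsimp1 : ∀ i, W i 1 = if p i = 0 then 1 else 0 := by
    intro i; rw [hW]; by_cases h : p i = 0 <;> simp [h]
  have hq0 : Matrix.vecMul q W 0 = lamMin p q := by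
    rw [vecMul_apply]
    rw [lamMin, Finset.sum_filter]
    apply Finset.sum_congr rfl
    intro i _
    rw [hWsimp0]
    by_cases h : p i = 0 <;> simp [h]
  refine ⟨W, ⟨hW0, hW1⟩, ?_, ?_⟩
  · ext j
    fin_cases j
    · show Matrix.vecMul p W 0 = 1
      rw [vecMul_apply, ← hp.2]
      apply Finset.sum_congr rfl
      intro i _
      rw [hWsimp0]
      by_cases h : p i = 0 <;> simp [h]
    · show Matrix.vecMul p W 1 = 0
      rw [vecMul_apply]
      apply Finset.sum_eq_zero
      intro i _
      rw [hWsimp1]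
      by_cases h : p i = 0 <;> simp [h]
  · ext j
    fin_cases j
    · exact hq0
    · show Matrix.vecMul q W 1 = 1 - lamMin p q
      rw [vecMul_apply]
      have : ∀ i, q i * W i 1 = q i - q i * W i 0 := by
        intro i
        have := hW1 i
        rw [Fin.sum_univ_two] at this
        linear_combination q i * this
      simp only [this]
      rw [Finset.sum_sub_distrib, hq.2]
      have h3 : ∑ i, q i * W i 0 = lamMin p q := hq0
      rw [h3]

lemma lamMax_eq_one_imp {p q : Fin n → ℝ} (hp : IsProbVec p) (hq : IsProbVec q)
    (h : lamMax p q = 1) : q = p := by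
  have hle : ∀ i, p i ≤ q i := by
    intro i
    have := lamMax_mul_le hp hq i
    rw [h, one_mul] at this
    exact this
  have hz : ∑ i, (q i - p i) = 0 := by
    rw [Finset.sum_sub_distrib, hp.2, hq.2, sub_self]
  funext i
  have := (Finset.sum_eq_zero_iff_of_nonneg
    (fun i _ => by linarith [hle i])).1 hz i (Finset.mem_univ i)
  linarith

lemma relMaj_from_max {p q : Fin n → ℝ} (hp : IsProbVec p) (hq : IsProbVec q) :
    RelMaj ![1, 0] ![lamMax p q, 1 - lamMax p q] p q := by
  set l := lamMax p q with hl
  by_cases hl1 : l = 1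
  · have hqp : q = p := lamMax_eq_one_imp hp hq hl1
    refine ⟨fun _ j => p j, ⟨fun i j => hp.1 j, fun i => hp.2⟩, ?_, ?_⟩
    · ext j
      erw [vecMul_apply, Fin.sum_univ_two]
      simp
    · ext j
      erw [vecMul_apply, Fin.sum_univ_two, hqp]
      simp only [Matrix.cons_val_zero, Matrix.cons_val_one, Matrix.head_cons]
      ring
  · have hlt : l < 1 := lt_of_le_of_ne (lamMax_le_one hp hq) hl1
    have h1l : 0 < 1 - l := by linarith
    set r : Fin n → ℝ := fun j => (q j - l * p j) / (1 - l) with hr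
    refine ⟨fun i j => if i = 0 then p j else r j, ⟨?_, ?_⟩, ?_, ?_⟩
    · intro i j
      by_cases h : i = 0
      · simp [h, hp.1 j]
      · simp only [h, if_false, hr]
        exact div_nonneg (by linarith [lamMax_mul_le hp hq j]) h1l.le
    · intro i
      by_cases h : i = 0
      · simp [h, hp.2]
      · simp only [h, if_false, hr]
        rw [← Finset.sum_div, Finset.sum_sub_distrib, ← Finset.mul_sum, hp.2, hq.2]
        field_simp
    · ext j
      erw [vecMul_apply, Fin.sum_univ_two]
      norm_num
    · ext j
      erw [vecMul_apply, Fin.sum_univ_two]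
      simp only [Matrix.cons_val_zero, Matrix.cons_val_one, Matrix.head_cons, hr, if_true, one_ne_zero, if_false]
      field_simp
      ring

lemma probVec_one : IsProbVec (fun _ : Fin 1 => (1:ℝ)) :=
  ⟨fun _ => zero_le_one, by simp⟩

lemma D_e1_e1 {D : (n : ℕ) → (Fin n → ℝ) → (Fin n → ℝ) → ℝ≥0∞}
    (hD : IsMonotoneDivergence D) : D 2 ![1, 0] ![1, 0] = 0 := by
  have hrm : RelMaj (fun _ : Fin 1 => (1:ℝ)) (fun _ => 1) ![1, 0] ![1, 0] := by
    refine ⟨fun _ j => ![(1:ℝ), 0] j, ⟨?_, ?_⟩, ?_, ?_⟩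
    · intro i j; fin_cases j <;> norm_num
    · intro i; simp [Fin.sum_univ_two]
    · ext j; erw [vecMul_apply]; simp
    · ext j; erw [vecMul_apply]; simp
  refine le_antisymm ?_ (zero_le)
  calc D 2 ![1, 0] ![1, 0]
      ≤ D 1 (fun _ => 1) (fun _ => 1) :=
        hD.dpi _ _ _ _ probVec_one probVec_one probVec_e1 probVec_e1 hrm
    _ = 0 := hD.normalized

lemma lamMin_one_one : lamMin (fun _ : Fin 1 => (1:ℝ)) (fun _ => 1) = 1 := by
  rw [lamMin]
  norm_num

lemma lamMax_one_one : lamMax (fun _ : Fin 1 => (1:ℝ)) (fun _ => 1) = 1 := by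
  rw [lamMax]
  have : {x : ℝ | ∃ _ : Fin 1, (1:ℝ) ≠ 0 ∧ x = 1 / 1} = {1} := by
    ext x
    simp
  rw [this, csInf_singleton]

lemma pair_one : (![(1:ℝ), 1 - 1] : Fin 2 → ℝ) = ![1, 0] := by norm_num

end Aux

/-- `𝔻_min` and `𝔻_max` are monotone divergences, and
`𝔻_min(p‖q) ≤ 𝔻(p‖q) ≤ 𝔻_max(p‖q)` for all probability vectors. -/
theorem stmt2 (D : (n : ℕ) → (Fin n → ℝ) → (Fin n → ℝ) → ℝ≥0∞)
    (hD : IsMonotoneDivergence D) :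
    IsMonotoneDivergence (DminOf D) ∧ IsMonotoneDivergence (DmaxOf D) ∧
    ∀ (n : ℕ) (p q : Fin n → ℝ), IsProbVec p → IsProbVec q →
      DminOf D n p q ≤ D n p q ∧ D n p q ≤ DmaxOf D n p q := by
  have hmin : IsMonotoneDivergence (DminOf D) := by
    constructor
    · intro n m p q p' q' hp hq hp' hq' hrel
      exact D_pair_mono hD (lamMin_nonneg hq) (lamMin_mono hp hq hp' hrel)
        (lamMin_le_one hq')
    · show D 2 ![1, 0] ![lamMin _ _, 1 - lamMin _ _] = 0
      rw [lamMin_one_one, pair_one]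
      exact D_e1_e1 hD
  have hmax : IsMonotoneDivergence (DmaxOf D) := by
    constructor
    · intro n m p q p' q' hp hq hp' hq' hrel
      exact D_pair_mono hD (lamMax_nonneg hp hq) (lamMax_mono hp hq hp' hrel)
        (lamMax_le_one hp' hq')
    · show D 2 ![1, 0] ![lamMax _ _, 1 - lamMax _ _] = 0
      rw [lamMax_one_one, pair_one]
      exact D_e1_e1 hD
  refine ⟨hmin, hmax, ?_⟩
  intro n p q hp hq
  constructor
  · exact hD.dpi _ _ _ _ hp hq probVec_e1
      (probVec_pair (lamMin_nonneg hq) (lamMin_le_one hq)) (relMaj_to_min hp hq)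
  · exact hD.dpi _ _ _ _ probVec_e1
      (probVec_pair (lamMax_nonneg hp hq) (lamMax_le_one hp hq)) hp hq
      (relMaj_from_max hp hq)
end

section
/- Let 𝔻 be a relative entropy. Then for every n ∈ ℕ, every probability vector p ∈ P(n), and every x ∈ [n]: 𝔻(e_x ‖ p) = −log p_x, where e_x ∈ P(n) is the deterministic vector with all mass on index x (with the convention −log 0 = +∞). -/
open scoped BigOperators ENNReal

namespace Stmt3Aux

variable (D : (n : ℕ) → (Fin n → ℝ) → (Fin n → ℝ) → ℝ≥0∞)

/-- `g t = D(e₁ ‖ (t, 1-t))`. -/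
noncomputable def g (t : ℝ) : ℝ≥0∞ := D 2 ![1, 0] ![t, 1 - t]

lemma probVec_e {n : ℕ} (x : Fin n) : IsProbVec (fun j => if j = x then (1:ℝ) else 0) := by
  refine ⟨fun i => by positivity, ?_⟩
  simp

lemma probVec_e2 : IsProbVec (![1, 0] : Fin 2 → ℝ) := by
  constructor
  · intro i; fin_cases i <;> norm_num
  · simp [Fin.sum_univ_two]

lemma probVec_q {t : ℝ} (h0 : 0 ≤ t) (h1 : t ≤ 1) : IsProbVec (![t, 1 - t] : Fin 2 → ℝ) := by
  constructor
  · intro i; fin_cases i <;> simp <;> linarith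
  · simp [Fin.sum_univ_two]

lemma px_le_one {n : ℕ} {p : Fin n → ℝ} (hp : IsProbVec p) (x : Fin n) : p x ≤ 1 := by
  have := Finset.single_le_sum (f := p) (fun i _ => hp.1 i) (Finset.mem_univ x)
  rw [hp.2] at this; exact this

lemma eq_e_of_px_one {n : ℕ} {p : Fin n → ℝ} (hp : IsProbVec p) {x : Fin n} (hx : p x = 1)
    (j : Fin n) (hj : j ≠ x) : p j = 0 := by
  by_contra h
  have hj0 : 0 < p j := lt_of_le_of_ne (hp.1 j) (Ne.symm h)
  have h2 : p x + p j ≤ ∑ i, p i := by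
    rw [← Finset.sum_pair hj.symm]  -- ?
    exact Finset.sum_le_sum_of_subset_of_nonneg (by simp) (fun i _ _ => hp.1 i)
  rw [hp.2, hx] at h2; linarith

/-- Reduction: `D n e_x p = g (p x)`. -/
lemma red (hD : IsRelativeEntropy D) {n : ℕ} (p : Fin n → ℝ) (hp : IsProbVec p) (x : Fin n) :
    D n (fun j => if j = x then 1 else 0) p = g D (p x) := by
  have hq := probVec_q (hp.1 x) (px_le_one hp x)
  apply le_antisymm
  · -- channel from dim 2 to dim n
    apply hD.dpi _ _ _ _ probVec_e2 hq (probVec_e x) hp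
    by_cases h1 : p x = 1
    · refine ⟨fun i j => if j = x then 1 else 0, ⟨fun i j => by positivity, fun i => by simp⟩, ?_, ?_⟩
      · funext j
        simp [Matrix.vecMul, dotProduct, Fin.sum_univ_two]
      · funext j
        simp only [Matrix.vecMul, dotProduct, Fin.sum_univ_two]
        by_cases hj : j = x
        · simp [hj, h1]
        · simp [hj, eq_e_of_px_one hp h1 j hj, h1]
    · have hlt : p x < 1 := lt_of_le_of_ne (px_le_one hp x) h1
      have hpos : 0 < 1 - p x := by linarith
      refine ⟨fun i j => if i = 0 then (if j = x then 1 else 0)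
          else (1 - p x)⁻¹ * (if j = x then 0 else p j), ⟨?_, ?_⟩, ?_, ?_⟩
      · intro i j
        by_cases hi : i = 0 <;> by_cases hj : j = x <;>
          simp [hi, hj, mul_nonneg (le_of_lt (inv_pos.2 hpos)) (hp.1 j)]
      · intro i
        by_cases hi : i = 0
        · simp [hi]
        · simp only [hi, if_false]
          rw [← Finset.mul_sum]
          have hsum : ∀ i : Fin n, (if i = x then (0:ℝ) else p i) = p i - (if i = x then p i else 0) := by
            intro i; by_cases hi : i = x <;> simp [hi]
          simp_rw [hsum, Finset.sum_sub_distrib, Finset.sum_ite_eq', hp.2]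
          simp
          field_simp
      · funext j
        simp [Matrix.vecMul, dotProduct, Fin.sum_univ_two]
      · funext j
        simp only [Matrix.vecMul, dotProduct, Fin.sum_univ_two]
        by_cases hj : j = x
        · simp [hj]
        · simp [hj]
          field_simp
  · -- channel from dim n to dim 2
    apply hD.dpi _ _ _ _ (probVec_e x) hp probVec_e2 hq
    refine ⟨fun i => if i = x then ![1,0] else ![0,1], ⟨?_, ?_⟩, ?_, ?_⟩
    · intro i j; by_cases hi : i = x <;> fin_cases j <;> simp [hi]
    · intro i; by_cases hi : i = x <;> simp [hi, Fin.sum_univ_two]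
    · funext j
      simp only [Matrix.vecMul, dotProduct]
      rw [Finset.sum_eq_single x]
      · simp
      · intro b _ hb; simp [hb]
      · simp
    · funext j
      simp only [Matrix.vecMul, dotProduct]
      fin_cases j
      · simp only [Fin.mk_zero]
        have : ∀ i, p i * (if i = x then ![1,0] else ![0,1]) 0 = if i = x then p i else 0 := by
          intro i; by_cases hi : i = x <;> simp [hi]
        simp only [this, Finset.sum_ite_eq', Finset.mem_univ, if_true]
        simp
      · have : ∀ i, p i * (if i = x then ![1,0] else ![0,1]) 1 = if i = x then 0 else p i := by
          intro i; by_cases hi : i = x <;> simp [hi]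
        simp only [Fin.mk_one]
        simp only [this]
        have hsum : ∀ i : Fin n, (if i = x then (0:ℝ) else p i) = p i - (if i = x then p i else 0) := by
          intro i; by_cases hi : i = x <;> simp [hi]
        simp_rw [hsum, Finset.sum_sub_distrib, Finset.sum_ite_eq', hp.2]
        simp

end Stmt3Aux
namespace Stmt3Aux
variable (D : (n : ℕ) → (Fin n → ℝ) → (Fin n → ℝ) → ℝ≥0∞)

/-- Antitonicity of `g` on `[0,1]`. -/
lemma g_anti (hD : IsRelativeEntropy D) {t s : ℝ} (h0 : 0 ≤ t) (hts : t ≤ s) (h1 : s ≤ 1) :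
    g D s ≤ g D t := by
  by_cases ht1 : t = 1
  · have : s = 1 := le_antisymm h1 (ht1 ▸ hts)
    rw [this, ht1]
  · have hlt : t < 1 := lt_of_le_of_ne (le_trans hts h1) ht1
    have hpos : 0 < 1 - t := by linarith
    apply hD.dpi _ _ _ _ probVec_e2 (probVec_q h0 (le_trans hts h1))
      probVec_e2 (probVec_q (le_trans h0 hts) h1)
    refine ⟨fun i => if i = 0 then ![1, 0] else ![(s-t)/(1-t), (1-s)/(1-t)], ⟨?_, ?_⟩, ?_, ?_⟩
    · intro i j
      by_cases hi : i = 0 <;> fin_cases j <;> simp [hi] <;> apply div_nonneg <;> linarith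
    · intro i
      by_cases hi : i = 0 <;> simp [hi, Fin.sum_univ_two] <;> field_simp <;> ring
    · funext j
      simp [Matrix.vecMul, dotProduct, Fin.sum_univ_two]
    · funext j
      fin_cases j <;>
        simp only [Matrix.vecMul, dotProduct, Fin.sum_univ_two, Fin.mk_zero, Fin.mk_one] <;>
        simp <;> field_simp <;> ring

/-- Multiplicativity. -/
lemma g_mul (hD : IsRelativeEntropy D) {t s : ℝ} (hs0 : 0 ≤ s) (hs1 : s ≤ 1)
    (ht0 : 0 ≤ t) (ht1 : t ≤ 1) : g D (s * t) = g D s + g D t := by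
  have hqs := probVec_q hs0 hs1
  have hqt := probVec_q ht0 ht1
  have hadd := hD.additive (![1,0]) (![s, 1-s]) (![1,0]) (![t, 1-t]) probVec_e2 hqs probVec_e2 hqt
  -- identify kron e e with evec x0
  set x0 : Fin (2*2) := finProdFinEquiv ((0:Fin 2), (0:Fin 2)) with hx0
  have hE : ∀ a : Fin 2, (![1,0] : Fin 2 → ℝ) a = if a = 0 then 1 else 0 := by
    intro a; fin_cases a <;> simp
  have hke : kron (![1,0] : Fin 2 → ℝ) ![1,0] = fun j => if j = x0 then (1:ℝ) else 0 := by
    funext j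
    simp only [kron, hE]
    by_cases h : j = x0
    · subst h; rw [hx0, Equiv.symm_apply_apply]; simp
    · rw [if_neg h]
      have hj : finProdFinEquiv.symm j ≠ ((0:Fin 2), (0:Fin 2)) := by
        intro hh
        exact h (by rw [hx0, ← hh, Equiv.apply_symm_apply])
      by_cases ha : (finProdFinEquiv.symm j).1 = 0
      · rw [if_pos ha, if_neg (fun hb => hj (Prod.ext ha hb))]; ring
      · rw [if_neg ha]; ring
  have hkq : IsProbVec (kron (![s,1-s] : Fin 2 → ℝ) ![t,1-t]) := by
    constructor
    · intro i; exact mul_nonneg (hqs.1 _) (hqt.1 _)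
    · have hsum := Fintype.sum_equiv (finProdFinEquiv.symm : Fin (2*2) ≃ (Fin 2 × Fin 2))
        (kron (![s,1-s]) (![t,1-t]))
        (fun y => (![s,1-s] : Fin 2 → ℝ) y.1 * (![t,1-t] : Fin 2 → ℝ) y.2) (fun i => rfl)
      rw [hsum, Fintype.sum_prod_type]
      simp_rw [← Finset.mul_sum]
      rw [← Finset.sum_mul, hqs.2, hqt.2, one_mul]
  have hval : kron (![s,1-s] : Fin 2 → ℝ) ![t,1-t] x0 = s * t := by
    simp [kron, hx0, Equiv.symm_apply_apply]
  have hred := red D hD _ hkq x0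
  rw [hval] at hred
  rw [hke] at hadd
  rw [hred] at hadd
  exact hadd

lemma g_half (hD : IsRelativeEntropy D) : g D (1/2) = 1 := by
  have : (![1/2, 1 - 1/2] : Fin 2 → ℝ) = ![1/2, 1/2] := by norm_num
  rw [g, this, hD.normalized]
  norm_num

lemma g_one (hD : IsRelativeEntropy D) : g D 1 = 0 := by
  have h2 : g D 1 = g D 1 + g D 1 := by
    have := g_mul D hD (t := 1) (s := 1) zero_le_one le_rfl zero_le_one le_rfl
    rw [mul_one] at this; exact this
  have hfin : g D 1 ≤ 1 := by
    rw [← g_half D hD]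
    exact g_anti D hD (by norm_num) (by norm_num) le_rfl
  have hne : g D 1 ≠ ⊤ := ne_top_of_le_ne_top ENNReal.one_ne_top hfin
  have h3 : g D 1 + 0 = g D 1 + g D 1 := by rw [add_zero]; exact h2
  exact ((ENNReal.add_right_inj hne).mp h3).symm

end Stmt3Aux
namespace Stmt3Aux
variable (D : (n : ℕ) → (Fin n → ℝ) → (Fin n → ℝ) → ℝ≥0∞)

lemma g_pow (hD : IsRelativeEntropy D) {t : ℝ} (h0 : 0 ≤ t) (h1 : t ≤ 1) (k : ℕ) :
    g D (t ^ k) = k * g D t := by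
  induction k with
  | zero => simp [g_one D hD]
  | succ k ih =>
    rw [pow_succ, g_mul D hD (pow_nonneg h0 k) (pow_le_one₀ h0 h1) h0 h1, ih]
    push_cast
    ring

lemma g_half_pow (hD : IsRelativeEntropy D) (m : ℕ) : g D ((1/2 : ℝ) ^ m) = m := by
  rw [g_pow D hD (by norm_num) (by norm_num) m, g_half D hD, mul_one]

lemma g_zero (hD : IsRelativeEntropy D) : g D 0 = ⊤ := by
  by_contra h
  obtain ⟨m, hm⟩ := exists_nat_gt (g D 0).toReal
  have hle : (m : ℝ≥0∞) ≤ g D 0 := by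
    rw [← g_half_pow D hD m]
    exact g_anti D hD le_rfl (by positivity) (by
      apply pow_le_one₀ <;> norm_num)
  have := ENNReal.toReal_mono h hle
  rw [ENNReal.toReal_natCast] at this
  linarith

lemma g_formula (hD : IsRelativeEntropy D) {t : ℝ} (h0 : 0 < t) (h1 : t ≤ 1) :
    g D t = ENNReal.ofReal (-(Real.logb 2 t)) := by
  set L : ℝ := -(Real.logb 2 t) with hL
  have hL0 : 0 ≤ L := by
    rw [hL, neg_nonneg]
    exact Real.logb_nonpos (by norm_num) (le_of_lt h0) h1
  -- t = 2 ^ (-L) as rpow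
  have ht : t = (2 : ℝ) ^ (-L) := by
    rw [hL, neg_neg, Real.rpow_logb (by norm_num) (by norm_num) h0]
  -- finiteness of g t
  have hfin : g D t ≠ ⊤ := by
    obtain ⟨m, hm⟩ := exists_pow_lt_of_lt_one h0 (by norm_num : (1/2 : ℝ) < 1)
    refine ne_top_of_le_ne_top (?_ : (m : ℝ≥0∞) ≠ ⊤) ?_
    · exact ENNReal.natCast_ne_top m
    · rw [← g_half_pow D hD m]
      exact g_anti D hD (by positivity) (le_of_lt hm) h1
  set r : ℝ := (g D t).toReal with hr
  have hgt : g D t = ENNReal.ofReal r := (ENNReal.ofReal_toReal hfin).symm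
  -- key inequality translations
  have key : ∀ k : ℕ, 0 < k → k * r ≤ k * L + 1 ∧ k * L - 1 ≤ k * r := by
    intro k hk
    have hpowk : t ^ k = (2:ℝ) ^ (-(k * L)) := by
      rw [ht, ← Real.rpow_natCast ((2:ℝ) ^ (-L)) k, ← Real.rpow_mul (by norm_num)]
      ring_nf
    have hhp : ∀ m : ℕ, ((1:ℝ)/2) ^ m = (2:ℝ) ^ (-(m:ℝ)) := by
      intro m
      rw [Real.rpow_neg (by norm_num), Real.rpow_natCast, one_div, inv_pow]
    constructor
    · -- upper bound with m = ceil (k L)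
      set m : ℕ := ⌈(k:ℝ) * L⌉₊ with hm
      have h1' : ((1:ℝ)/2) ^ m ≤ t ^ k := by
        rw [hhp, hpowk]
        apply Real.rpow_le_rpow_left_iff (by norm_num : (1:ℝ) < 2) |>.mpr
        simp only [neg_le_neg_iff]
        exact Nat.le_ceil _
      have hmono := g_anti D hD (by positivity) h1' (pow_le_one₀ (le_of_lt h0) h1)
      rw [g_pow D hD (le_of_lt h0) h1 k, g_half_pow D hD m] at hmono
      have := ENNReal.toReal_mono (ENNReal.natCast_ne_top m) hmono
      rw [ENNReal.toReal_mul, ENNReal.toReal_natCast, ENNReal.toReal_natCast] at this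
      have hceil : (m : ℝ) < (k:ℝ) * L + 1 := Nat.ceil_lt_add_one (by positivity)
      calc (k:ℝ) * r ≤ m := this
        _ ≤ (k:ℝ) * L + 1 := le_of_lt hceil
    · -- lower bound with m = floor (k L)
      set m : ℕ := ⌊(k:ℝ) * L⌋₊ with hm
      have h1' : t ^ k ≤ ((1:ℝ)/2) ^ m := by
        rw [hhp, hpowk]
        apply Real.rpow_le_rpow_left_iff (by norm_num : (1:ℝ) < 2) |>.mpr
        simp only [neg_le_neg_iff]
        exact Nat.floor_le (by positivity)
      have hmono := g_anti D hD (by positivity) h1' (by apply pow_le_one₀ <;> norm_num)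
      rw [g_pow D hD (le_of_lt h0) h1 k, g_half_pow D hD m] at hmono
      have hkfin : ((k : ℝ≥0∞) * g D t) ≠ ⊤ :=
        ENNReal.mul_ne_top (ENNReal.natCast_ne_top k) hfin
      have := ENNReal.toReal_mono hkfin hmono
      rw [ENNReal.toReal_mul, ENNReal.toReal_natCast, ENNReal.toReal_natCast] at this
      have hfloor : (k:ℝ) * L - 1 ≤ m := by
        have := Nat.lt_floor_add_one ((k:ℝ) * L)
        linarith
      linarith
  have hrL : r = L := by
    have hub : r ≤ L := by
      by_contra hub
      push_neg at hub
      obtain ⟨k, hk⟩ := exists_nat_one_div_lt (show (0:ℝ) < r - L by linarith)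
      have hkpos : 0 < k + 1 := Nat.succ_pos k
      have := (key (k+1) hkpos).1
      have hk1 : (0:ℝ) < (k:ℝ) + 1 := by positivity
      rw [div_lt_iff₀ hk1] at hk
      push_cast at this hk ⊢
      nlinarith
    have hlb : L ≤ r := by
      by_contra hlb
      push_neg at hlb
      obtain ⟨k, hk⟩ := exists_nat_one_div_lt (show (0:ℝ) < L - r by linarith)
      have hkpos : 0 < k + 1 := Nat.succ_pos k
      have := (key (k+1) hkpos).2
      have hk1 : (0:ℝ) < (k:ℝ) + 1 := by positivity
      rw [div_lt_iff₀ hk1] at hk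
      push_cast at this hk ⊢
      nlinarith
    linarith
  rw [hgt, hrL]

end Stmt3Aux
/-- for a relative entropy `𝔻`, `𝔻(e_x ‖ p) = −log p_x`
(binary logarithm, with `−log 0 = +∞`). -/
theorem stmt3 (D : (n : ℕ) → (Fin n → ℝ) → (Fin n → ℝ) → ℝ≥0∞)
    (hD : IsRelativeEntropy D) (n : ℕ) (p : Fin n → ℝ) (hp : IsProbVec p) (x : Fin n) :
    D n (fun j => if j = x then 1 else 0) p =
      if p x = 0 then ⊤ else ENNReal.ofReal (-(Real.logb 2 (p x))) := by
  rw [Stmt3Aux.red D hD p hp x]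
  by_cases h : p x = 0
  case pos =>
    rw [if_pos h, h]
    exact Stmt3Aux.g_zero D hD
  case neg =>
    rw [if_neg h]
    exact Stmt3Aux.g_formula D hD (lt_of_le_of_ne (hp.1 x) (Ne.symm h)) (Stmt3Aux.px_le_one hp x)
end

section
/- Let 𝔻 be a relative entropy and n ∈ ℕ. (1) Upper semi-continuity: for every p ∈ P(n), q ∈ P_{>0}(n) and all sequences {p_k}, {q_k} ⊂ P_{>0}(n) with p_k → p and q_k → q, one has limsup_{k→∞} 𝔻(p_k‖q_k) ≤ 𝔻(p‖q). (2) Continuity: if additionally p ∈ P_{>0}(n), then lim_{k→∞} 𝔻(p_k‖q_k) = 𝔻(p‖q). -/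
open scoped BigOperators ENNReal

section Stmt6Aux

open Filter Topology Matrix

variable {D : (n : ℕ) → (Fin n → ℝ) → (Fin n → ℝ) → ℝ≥0∞}

lemma prob_entry_le_one {n : ℕ} {p : Fin n → ℝ} (hp : IsProbVec p) (i : Fin n) : p i ≤ 1 := by
  rw [← hp.2]
  exact Finset.single_le_sum (fun j _ => hp.1 j) (Finset.mem_univ i)

lemma isProbVec_pair {a : ℝ} (h0 : 0 ≤ a) (h1 : a ≤ 1) : IsProbVec ![a, 1 - a] := by
  refine ⟨fun i => ?_, by simp [Fin.sum_univ_two]⟩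
  fin_cases i <;> simp <;> linarith

lemma isProbVec_e1 : IsProbVec (![1, 0] : Fin 2 → ℝ) := by
  refine ⟨fun i => ?_, by simp [Fin.sum_univ_two]⟩
  fin_cases i <;> norm_num

lemma isProbVec_one : IsProbVec (fun _ : Fin 1 => (1 : ℝ)) :=
  ⟨fun _ => one_pos.le, by simp⟩

lemma isProbVec_kron {n m : ℕ} {p : Fin n → ℝ} {q : Fin m → ℝ}
    (hp : IsProbVec p) (hq : IsProbVec q) : IsProbVec (kron p q) := by
  refine ⟨fun i => mul_nonneg (hp.1 _) (hq.1 _), ?_⟩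
  rw [← Equiv.sum_comp finProdFinEquiv (kron p q)]
  simp only [kron, Equiv.symm_apply_apply]
  rw [Fintype.sum_prod_type]
  simp only [← Finset.mul_sum, hq.2, mul_one, hp.2]

lemma D1_eq_zero (hD : IsRelativeEntropy D) : D 1 (fun _ => 1) (fun _ => 1) = 0 := by
  have hhalf : IsProbVec (![1/2, 1/2] : Fin 2 → ℝ) := by
    refine ⟨fun i => ?_, by norm_num [Fin.sum_univ_two]⟩
    fin_cases i <;> norm_num
  have hle : D 1 (fun _ => 1) (fun _ => 1) ≤ D 2 ![1, 0] ![1/2, 1/2] := by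
    apply hD.dpi _ _ _ _ isProbVec_e1 hhalf isProbVec_one isProbVec_one
    refine ⟨fun _ _ => 1, ⟨fun _ _ => one_pos.le, fun i => by simp⟩, ?_, ?_⟩ <;>
    · funext j
      norm_num [Matrix.vecMul, dotProduct, Fin.sum_univ_two]
  rw [hD.normalized] at hle
  have hfin : D 1 (fun _ => 1) (fun _ => 1) ≠ ⊤ :=
    ne_top_of_le_ne_top ENNReal.ofReal_ne_top hle
  have hkron : kron (fun _ : Fin 1 => (1:ℝ)) (fun _ : Fin 1 => (1:ℝ)) = fun _ => 1 := by
    funext i; simp [kron]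
  have hadd := hD.additive (fun _ : Fin 1 => (1:ℝ)) (fun _ => 1) (fun _ => 1) (fun _ => 1)
    isProbVec_one isProbVec_one isProbVec_one isProbVec_one
  rw [hkron] at hadd
  have : D 1 (fun _ => 1) (fun _ => 1) + 0 = D 1 (fun _ => 1) (fun _ => 1) + D 1 (fun _ => 1) (fun _ => 1) := by
    rw [add_zero]; exact hadd
  exact ((ENNReal.add_right_inj hfin).mp this).symm

lemma dmax (hD : IsRelativeEntropy D) {n : ℕ} {p q : Fin n → ℝ}
    (hp : IsProbVec p) (hq : IsProbVec q) {l : ℝ} (h0 : 0 < l) (h1 : l < 1)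
    (hle : ∀ i, l * p i ≤ q i) :
    D n p q ≤ D 2 ![1, 0] ![l, 1 - l] := by
  apply hD.dpi _ _ _ _ isProbVec_e1 (isProbVec_pair h0.le h1.le) hp hq
  refine ⟨fun t j => if t = 0 then p j else (q j - l * p j) / (1 - l), ⟨?_, ?_⟩, ?_, ?_⟩
  · intro i j; dsimp only
    split
    · exact hp.1 j
    · exact div_nonneg (by linarith [hle j]) (by linarith)
  · intro i; by_cases h : i = 0
    · simp [h, hp.2]
    · simp only [h, if_false]
      rw [← Finset.sum_div, Finset.sum_sub_distrib, ← Finset.mul_sum, hp.2, hq.2]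
      rw [mul_one]
      exact div_self (by linarith)
  · funext j
    simp [Matrix.vecMul, dotProduct, Fin.sum_univ_two]
  · funext j
    simp only [Matrix.vecMul, dotProduct, Fin.sum_univ_two]
    have h1l : (1:ℝ) - l ≠ 0 := by linarith
    simp only [Matrix.cons_val_zero, Matrix.cons_val_one, Matrix.head_cons]
    norm_num
    field_simp
    ring
lemma f_submul (hD : IsRelativeEntropy D) {a b : ℝ}
    (ha0 : 0 < a) (ha1 : a ≤ 1) (hb0 : 0 < b) (hb1 : b ≤ 1) :
    D 2 ![1, 0] ![a * b, 1 - a * b] ≤ D 2 ![1, 0] ![a, 1 - a] + D 2 ![1, 0] ![b, 1 - b] := by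
  have hab0 : 0 < a * b := mul_pos ha0 hb0
  have hab1 : a * b ≤ 1 := by nlinarith
  rw [← hD.additive ![1, 0] ![a, 1 - a] ![1, 0] ![b, 1 - b] isProbVec_e1
    (isProbVec_pair ha0.le ha1) isProbVec_e1 (isProbVec_pair hb0.le hb1)]
  apply hD.dpi _ _ _ _ (isProbVec_kron isProbVec_e1 isProbVec_e1)
    (isProbVec_kron (isProbVec_pair ha0.le ha1) (isProbVec_pair hb0.le hb1))
    isProbVec_e1 (isProbVec_pair hab0.le hab1)
  refine ⟨fun idx j => if finProdFinEquiv.symm idx = ((0 : Fin 2), (0 : Fin 2))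
      then ![1, 0] j else ![0, 1] j, ⟨?_, ?_⟩, ?_, ?_⟩
  · intro i j; dsimp only; split <;> fin_cases j <;> norm_num
  · intro i; dsimp only; split <;> simp [Fin.sum_univ_two]
  · funext j
    show (∑ idx, kron ![(1:ℝ), 0] ![1, 0] idx *
      (if finProdFinEquiv.symm idx = ((0 : Fin 2), (0 : Fin 2)) then ![1, 0] j else ![0, 1] j)) = _
    rw [← Equiv.sum_comp finProdFinEquiv (fun idx => kron ![(1:ℝ), 0] ![1, 0] idx *
      (if finProdFinEquiv.symm idx = ((0 : Fin 2), (0 : Fin 2)) then ![1, 0] j else ![0, 1] j))]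
    simp only [kron, Equiv.symm_apply_apply]
    rw [Fintype.sum_prod_type]
    fin_cases j <;> simp [Fin.sum_univ_two, Prod.ext_iff]
  · funext j
    show (∑ idx, kron ![a, 1 - a] ![b, 1 - b] idx *
      (if finProdFinEquiv.symm idx = ((0 : Fin 2), (0 : Fin 2)) then ![1, 0] j else ![0, 1] j)) = _
    rw [← Equiv.sum_comp finProdFinEquiv (fun idx => kron ![a, 1 - a] ![b, 1 - b] idx *
      (if finProdFinEquiv.symm idx = ((0 : Fin 2), (0 : Fin 2)) then ![1, 0] j else ![0, 1] j))]
    simp only [kron, Equiv.symm_apply_apply]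
    rw [Fintype.sum_prod_type]
    fin_cases j <;> simp [Fin.sum_univ_two, Prod.ext_iff] <;> ring
lemma f_one (hD : IsRelativeEntropy D) : D 2 ![1, 0] ![1, 0] = 0 := by
  refine le_antisymm ?_ (zero_le)
  rw [← D1_eq_zero hD]
  apply hD.dpi _ _ _ _ isProbVec_one isProbVec_one isProbVec_e1 isProbVec_e1
  refine ⟨fun _ j => ![1, 0] j, ⟨?_, ?_⟩, ?_, ?_⟩
  · intro i j; fin_cases j <;> norm_num
  · intro i; simp [Fin.sum_univ_two]
  · funext j; simp [Matrix.vecMul, dotProduct, Fin.sum_univ_one]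
  · funext j; simp [Matrix.vecMul, dotProduct, Fin.sum_univ_one]

lemma f_half (hD : IsRelativeEntropy D) : D 2 ![1, 0] ![1/2, 1 - 1/2] = 1 := by
  have : (![1/2, 1 - 1/2] : Fin 2 → ℝ) = ![1/2, 1/2] := by
    funext i; fin_cases i <;> norm_num
  rw [this, hD.normalized, Real.logb_self_eq_one (by norm_num)]
  simp

lemma f_halfpow (hD : IsRelativeEntropy D) (j : ℕ) :
    D 2 ![1, 0] ![(1/2 : ℝ)^j, 1 - (1/2 : ℝ)^j] ≤ (j : ℝ≥0∞) := by
  induction j with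
  | zero =>
    have : (![(1/2 : ℝ)^0, 1 - (1/2 : ℝ)^0] : Fin 2 → ℝ) = ![1, 0] := by
      funext i; fin_cases i <;> norm_num
    rw [this, f_one hD]; simp
  | succ j ih =>
    have hpow : ((1/2 : ℝ))^(j+1) = (1/2 : ℝ)^j * (1/2) := by ring
    rw [hpow]
    calc D 2 ![1, 0] ![(1/2 : ℝ)^j * (1/2), 1 - (1/2 : ℝ)^j * (1/2)]
        ≤ D 2 ![1, 0] ![(1/2 : ℝ)^j, 1 - (1/2 : ℝ)^j] + D 2 ![1, 0] ![1/2, 1 - 1/2] :=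
          f_submul hD (by positivity) (by apply pow_le_one₀ <;> norm_num) (by norm_num) (by norm_num)
      _ ≤ (j : ℝ≥0∞) + 1 := by rw [f_half hD]; exact add_le_add_left ih 1
      _ = ((j + 1 : ℕ) : ℝ≥0∞) := by push_cast; ring
lemma f_base (hD : IsRelativeEntropy D) {y : ℝ} (hy0 : 0 < y) (hy1 : y < 1) :
    D 2 ![1, 0] ![y, 1 - y] ≤ ENNReal.ofReal (-Real.logb 2 y + 1) := by
  set L := -Real.logb 2 y with hL
  have hLpos : 0 < L := by
    have : Real.logb 2 y < 0 := Real.logb_neg (by norm_num) hy0 hy1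
    linarith
  set j := ⌈L⌉₊ with hj
  have hj1 : 1 ≤ j := Nat.one_le_iff_ne_zero.mpr (by
    simp only [hj, ne_eq, Nat.ceil_eq_zero, not_le]; exact hLpos)
  have hhalfpow : (0:ℝ) < (1/2 : ℝ)^j := by positivity
  have hle : (1/2 : ℝ)^j ≤ y := by
    have h2 : (2:ℝ) ^ (Real.logb 2 y) = y := Real.rpow_logb (by norm_num) (by norm_num) hy0
    have h3 : ((1:ℝ)/2)^j = (2:ℝ) ^ (-(j:ℝ)) := by
      rw [Real.rpow_neg (by norm_num), Real.rpow_natCast, one_div, inv_pow]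
    rw [h3, ← h2]
    apply Real.rpow_le_rpow_of_exponent_le (by norm_num)
    have hceil : L ≤ (j : ℝ) := Nat.le_ceil L
    rw [hL] at hceil
    linarith
  have hjlt1 : (1/2 : ℝ)^j < 1 := by
    apply pow_lt_one₀ (by norm_num) (by norm_num)
    omega
  have hle' : ((2:ℝ)^j)⁻¹ ≤ y := by rw [← inv_pow, ← one_div]; exact hle
  calc D 2 ![1, 0] ![y, 1 - y]
      ≤ D 2 ![1, 0] ![(1/2 : ℝ)^j, 1 - (1/2 : ℝ)^j] := by
        apply dmax hD isProbVec_e1 (isProbVec_pair hy0.le hy1.le) hhalfpow hjlt1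
        intro i; fin_cases i <;> simp <;> linarith
    _ ≤ (j : ℝ≥0∞) := f_halfpow hD j
    _ ≤ ENNReal.ofReal (L + 1) := by
        rw [← ENNReal.ofReal_natCast j]
        apply ENNReal.ofReal_le_ofReal
        have := Nat.ceil_lt_add_one hLpos.le
        rw [← hj] at this
        linarith
    _ = ENNReal.ofReal (-Real.logb 2 y + 1) := by rw [hL]

lemma f_double (hD : IsRelativeEntropy D) {y : ℝ} (hy0 : 0 < y) (hy1 : y < 1) :
    2 * D 2 ![1, 0] ![y, 1 - y] ≤ D 2 ![1, 0] ![y^2, 1 - y^2] := by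
  have hpair := isProbVec_pair hy0.le hy1.le
  have hadd := hD.additive ![1, 0] ![y, 1 - y] ![1, 0] ![y, 1 - y]
    isProbVec_e1 hpair isProbVec_e1 hpair
  rw [two_mul, ← hadd]
  apply dmax hD (isProbVec_kron isProbVec_e1 isProbVec_e1) (isProbVec_kron hpair hpair)
    (by positivity) (by nlinarith)
  intro idx
  simp only [kron]
  rcases (finProdFinEquiv.symm idx) with ⟨s, t⟩
  fin_cases s <;> fin_cases t <;> simp <;> nlinarith

lemma f_le_logb (hD : IsRelativeEntropy D) {x : ℝ} (h0 : 0 < x) (h1 : x < 1) :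
    D 2 ![1, 0] ![x, 1 - x] ≤ ENNReal.ofReal (-Real.logb 2 x) := by
  have iter : ∀ m : ℕ, (2 : ℝ≥0∞)^m * D 2 ![1, 0] ![x, 1 - x]
      ≤ D 2 ![1, 0] ![x^(2^m), 1 - x^(2^m)] := by
    intro m
    induction m with
    | zero => simp
    | succ m ih =>
      have h0m : 0 < x^(2^m) := pow_pos h0 _
      have h1m : x^(2^m) < 1 := pow_lt_one₀ h0.le h1 (by positivity)
      calc (2 : ℝ≥0∞)^(m+1) * D 2 ![1, 0] ![x, 1 - x]
          = 2 * ((2 : ℝ≥0∞)^m * D 2 ![1, 0] ![x, 1 - x]) := by ring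
        _ ≤ 2 * D 2 ![1, 0] ![x^(2^m), 1 - x^(2^m)] := by
            exact mul_le_mul_right ih 2
        _ ≤ D 2 ![1, 0] ![(x^(2^m))^2, 1 - (x^(2^m))^2] := f_double hD h0m h1m
        _ = D 2 ![1, 0] ![x^(2^(m+1)), 1 - x^(2^(m+1))] := by
            rw [← pow_mul]
            norm_num [pow_succ, mul_comm]
  have key : ∀ m : ℕ, D 2 ![1, 0] ![x, 1 - x]
      ≤ ENNReal.ofReal (-Real.logb 2 x + (1/2 : ℝ)^m) := by
    intro m
    have h0m : 0 < x^(2^m) := pow_pos h0 _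
    have h1m : x^(2^m) < 1 := pow_lt_one₀ h0.le h1 (by positivity)
    have hchain := (iter m).trans (f_base hD h0m h1m)
    have hlogpow : -Real.logb 2 (x^(2^m)) = (2^m : ℝ) * (-Real.logb 2 x) := by
      rw [Real.logb_pow]
      push_cast
      ring
    rw [hlogpow] at hchain
    have heq : ((2:ℝ)^m) * (-Real.logb 2 x) + 1 = (2:ℝ)^m * ((-Real.logb 2 x) + (1/2 : ℝ)^m) := by
      field_simp
      rw [mul_add, ← mul_pow, show (2:ℝ) * (1/2) = 1 by norm_num, one_pow]; ring
    rw [heq, ENNReal.ofReal_mul (by positivity)] at hchain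
    have h2m : ENNReal.ofReal ((2:ℝ)^m) = (2 : ℝ≥0∞)^m := by
      rw [ENNReal.ofReal_pow (by norm_num)]
      norm_num
    rw [h2m] at hchain
    exact (ENNReal.mul_le_mul_iff_right (by positivity) (by simp)).mp hchain
  apply ge_of_tendsto (x := atTop)
    (f := fun m : ℕ => ENNReal.ofReal (-Real.logb 2 x + (1/2 : ℝ)^m))
  · have : Filter.Tendsto (fun m : ℕ => -Real.logb 2 x + (1/2 : ℝ)^m) atTop
        (𝓝 (-Real.logb 2 x + 0)) :=
      tendsto_const_nhds.add (tendsto_pow_atTop_nhds_zero_of_lt_one (by norm_num) (by norm_num))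
    rw [add_zero] at this
    exact (ENNReal.continuous_ofReal.continuousAt).tendsto.comp this
  · exact Filter.Eventually.of_forall key
lemma step_lemma (hD : IsRelativeEntropy D) {n : ℕ} {p q p' q' : Fin n → ℝ}
    (hp : IsProbVec p) (hq : IsProbVec q) (hp' : IsProbVec p') (hq' : IsProbVec q')
    {δ ε : ℝ} (hδ1 : δ < 1) (hε0 : 0 < ε) (hεδ : ε < δ)
    (hA : ∀ i, (1 - ε) * p i ≤ p' i)
    (hB : ∀ i, p' i - (1 - ε) * p i ≤ q' i - (1 - δ) * q i) :
    D n p' q' ≤ D n p q + ENNReal.ofReal (-Real.logb 2 (1 - δ)) := by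
  have hδ0 : 0 < δ := hε0.trans hεδ
  set v : Fin n → ℝ := fun i => (p' i - (1 - ε) * p i) / ε with hv
  set w : Fin n → ℝ := fun i => (q' i - (1 - δ) * q i - (p' i - (1 - ε) * p i)) / (δ - ε) with hw
  have hvnn : ∀ i, 0 ≤ v i := fun i => div_nonneg (by linarith [hA i]) hε0.le
  have hwnn : ∀ i, 0 ≤ w i := fun i => div_nonneg (by linarith [hB i]) (by linarith)
  have hvsum : ∑ i, v i = 1 := by
    rw [hv, ← Finset.sum_div, Finset.sum_sub_distrib, ← Finset.mul_sum, hp'.2, hp.2, mul_one]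
    field_simp
    ring
  have hwsum : ∑ i, w i = 1 := by
    rw [hw, ← Finset.sum_div]
    rw [show (fun i => q' i - (1 - δ) * q i - (p' i - (1 - ε) * p i)) =
      (fun i => (q' i - (1 - δ) * q i) - (p' i - (1 - ε) * p i)) from rfl]
    rw [Finset.sum_sub_distrib, Finset.sum_sub_distrib, Finset.sum_sub_distrib,
      ← Finset.mul_sum, ← Finset.mul_sum, hp'.2, hp.2, hq'.2, hq.2, mul_one, mul_one]
    rw [show (1 - (1 - δ) - (1 - (1 - ε))) = δ - ε by ring]
    exact div_self (by linarith)
  set r : Fin 3 → ℝ := ![1 - ε, ε, 0] with hr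
  set s : Fin 3 → ℝ := ![1 - δ, ε, δ - ε] with hs
  have hrP : IsProbVec r := by
    refine ⟨fun i => ?_, by simp [hr, Fin.sum_univ_three]⟩
    fin_cases i <;> simp [hr] <;> linarith
  have hsP : IsProbVec s := by
    refine ⟨fun i => ?_, by simp [hs, Fin.sum_univ_three]⟩
    fin_cases i <;> simp [hs] <;> linarith
  have hchain : D n p' q' ≤ D (n * 3) (kron p r) (kron q s) := by
    apply hD.dpi _ _ _ _ (isProbVec_kron hp hrP) (isProbVec_kron hq hsP) hp' hq'
    refine ⟨fun idx j =>
      if (finProdFinEquiv.symm idx).2 = 0 then (if j = (finProdFinEquiv.symm idx).1 then 1 else 0)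
      else if (finProdFinEquiv.symm idx).2 = 1 then v j else w j, ⟨?_, ?_⟩, ?_, ?_⟩
    · intro i j; dsimp only
      split
      · split <;> norm_num
      · split
        · exact hvnn j
        · exact hwnn j
    · intro i; dsimp only
      rcases h2 : (finProdFinEquiv.symm i).2 with _
      split
      · simp [Finset.sum_ite_eq']
      · split
        · exact hvsum
        · exact hwsum
    · funext j
      show (∑ idx, kron p r idx * _) = _
      rw [← Equiv.sum_comp finProdFinEquiv (fun idx => kron p r idx *
        (if (finProdFinEquiv.symm idx).2 = 0 then (if j = (finProdFinEquiv.symm idx).1 then 1 else 0)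
         else if (finProdFinEquiv.symm idx).2 = 1 then v j else w j))]
      simp only [kron, Equiv.symm_apply_apply]
      rw [Fintype.sum_prod_type]
      have hterm : ∀ i : Fin n, (∑ t : Fin 3, p i * r t *
          (if t = 0 then (if j = i then 1 else 0) else if t = 1 then v j else w j))
          = p i * (1 - ε) * (if j = i then 1 else 0) + p i * (ε * v j) := by
        intro i
        rw [Fin.sum_univ_three]
        simp [hr]
        ring
      rw [Finset.sum_congr rfl (fun i _ => hterm i)]
      rw [Finset.sum_add_distrib, ← Finset.sum_mul]
      simp only [mul_ite, mul_one, mul_zero, Finset.sum_ite_eq, Finset.mem_univ, if_true, hp.2]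
      have hvj : ε * v j = p' j - (1 - ε) * p j := by
        rw [hv]; field_simp
      linarith
    · funext j
      show (∑ idx, kron q s idx * _) = _
      rw [← Equiv.sum_comp finProdFinEquiv (fun idx => kron q s idx *
        (if (finProdFinEquiv.symm idx).2 = 0 then (if j = (finProdFinEquiv.symm idx).1 then 1 else 0)
         else if (finProdFinEquiv.symm idx).2 = 1 then v j else w j))]
      simp only [kron, Equiv.symm_apply_apply]
      rw [Fintype.sum_prod_type]
      have hterm : ∀ i : Fin n, (∑ t : Fin 3, q i * s t *
          (if t = 0 then (if j = i then 1 else 0) else if t = 1 then v j else w j))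
          = q i * (1 - δ) * (if j = i then 1 else 0) + q i * (ε * v j + (δ - ε) * w j) := by
        intro i
        rw [Fin.sum_univ_three]
        simp [hs]
        ring
      rw [Finset.sum_congr rfl (fun i _ => hterm i)]
      rw [Finset.sum_add_distrib, ← Finset.sum_mul]
      simp only [mul_ite, mul_one, mul_zero, Finset.sum_ite_eq, Finset.mem_univ, if_true, hq.2]
      have hvj : ε * v j = p' j - (1 - ε) * p j := by
        rw [hv]; field_simp
      have hwj : (δ - ε) * w j = q' j - (1 - δ) * q j - (p' j - (1 - ε) * p j) := by
        rw [hw]; dsimp only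
        rw [mul_comm, div_mul_cancel₀ _ (by linarith : δ - ε ≠ 0)]
      linarith
  have hadd := hD.additive p q r s hp hq hrP hsP
  have hrs : D 3 r s ≤ ENNReal.ofReal (-Real.logb 2 (1 - δ)) := by
    refine le_trans (dmax hD hrP hsP (l := 1 - δ) (by linarith) (by linarith) ?_)
      (f_le_logb hD (by linarith) (by linarith))
    intro i; fin_cases i <;> simp [hr, hs] <;> nlinarith
  calc D n p' q' ≤ D (n * 3) (kron p r) (kron q s) := hchain
    _ = D n p q + D 3 r s := hadd
    _ ≤ D n p q + ENNReal.ofReal (-Real.logb 2 (1 - δ)) := add_le_add_right hrs _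

end Stmt6Aux

open Filter Topology in
/-- a relative entropy is upper semi-continuous at `(p,q)` with
`q ∈ P_{>0}(n)` along sequences in `P_{>0}(n) × P_{>0}(n)`, and continuous there
if additionally `p ∈ P_{>0}(n)`. -/
theorem stmt6 (D : (n : ℕ) → (Fin n → ℝ) → (Fin n → ℝ) → ℝ≥0∞)
    (hD : IsRelativeEntropy D) (n : ℕ)
    (p q : Fin n → ℝ) (hp : IsProbVec p) (hq : IsProbVec q) (hqpos : ∀ i, 0 < q i)
    (pk qk : ℕ → Fin n → ℝ)
    (hpk : ∀ k, IsProbVec (pk k)) (hpkpos : ∀ k i, 0 < pk k i)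
    (hqk : ∀ k, IsProbVec (qk k)) (hqkpos : ∀ k i, 0 < qk k i)
    (hpc : ∀ i, Tendsto (fun k => pk k i) atTop (𝓝 (p i)))
    (hqc : ∀ i, Tendsto (fun k => qk k i) atTop (𝓝 (q i))) :
    Filter.limsup (fun k => D n (pk k) (qk k)) atTop ≤ D n p q ∧
      ((∀ i, 0 < p i) →
        Tendsto (fun k => D n (pk k) (qk k)) atTop (𝓝 (D n p q))) := by
  have hn : 0 < n := by
    rcases Nat.eq_zero_or_pos n with h | h
    · exfalso; subst h; simpa using hp.2
    · exact h
  obtain ⟨i₀, -, hi₀⟩ := Finset.exists_min_image Finset.univ q ⟨⟨0, hn⟩, Finset.mem_univ _⟩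
  set c := q i₀ with hc
  have hc0 : 0 < c := hqpos i₀
  have hc1 : c ≤ 1 := prob_entry_le_one hq i₀
  have hci : ∀ i, c ≤ q i := fun i => hi₀ i (Finset.mem_univ i)
  set u : ℕ → ℝ≥0∞ := fun k => D n (pk k) (qk k) with hu
  -- the key eventual bounds for each δ
  have key : ∀ δ : ℝ, 0 < δ → δ < 1 →
      (∀ᶠ k in atTop, u k ≤ D n p q + ENNReal.ofReal (-Real.logb 2 (1 - δ))) ∧
      ((∀ i, 0 < p i) →
        ∀ᶠ k in atTop, D n p q ≤ u k + ENNReal.ofReal (-Real.logb 2 (1 - δ))) := by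
    intro δ hδ0 hδ1
    set ε := δ * c / 2 with hε
    have hε0 : 0 < ε := by positivity
    have hεδ : ε < δ := by nlinarith
    have hεc : ∀ i, ε * p i < δ * q i := by
      intro i
      have h1 : ε * p i ≤ ε := by
        nlinarith [prob_entry_le_one hp i, hp.1 i]
      have h2 : ε < δ * c := by nlinarith
      have h3 : δ * c ≤ δ * q i := by nlinarith [hci i]
      linarith
    constructor
    · -- source (p,q), target (pk k, qk k)
      have hAev : ∀ᶠ k in atTop, ∀ i, (1 - ε) * p i ≤ pk k i := by
        rw [Filter.eventually_all]
        intro i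
        rcases eq_or_lt_of_le (hp.1 i) with h | h
        · exact Filter.Eventually.of_forall fun k => by
            rw [← h, mul_zero]; exact (hpkpos k i).le
        · have hlt : (1 - ε) * p i < p i := by nlinarith
          exact ((hpc i).eventually_const_lt hlt).mono fun k hk => hk.le
      have hBev : ∀ᶠ k in atTop, ∀ i, pk k i - (1 - ε) * p i ≤ qk k i - (1 - δ) * q i := by
        rw [Filter.eventually_all]
        intro i
        have h1 : Tendsto (fun k => pk k i - (1 - ε) * p i) atTop (𝓝 (ε * p i)) := by
          have := (hpc i).sub_const ((1 - ε) * p i)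
          have heq : p i - (1 - ε) * p i = ε * p i := by ring
          rwa [heq] at this
        have h2 : Tendsto (fun k => qk k i - (1 - δ) * q i) atTop (𝓝 (δ * q i)) := by
          have := (hqc i).sub_const ((1 - δ) * q i)
          have heq : q i - (1 - δ) * q i = δ * q i := by ring
          rwa [heq] at this
        exact (h1.eventually_lt h2 (hεc i)).mono fun k hk => hk.le
      filter_upwards [hAev, hBev] with k hA hB
      exact step_lemma hD hp hq (hpk k) (hqk k) hδ1 hε0 hεδ hA hB
    · -- source (pk k, qk k), target (p,q)
      intro hppos
      have hAev : ∀ᶠ k in atTop, ∀ i, (1 - ε) * pk k i ≤ p i := by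
        rw [Filter.eventually_all]
        intro i
        have h1 : Tendsto (fun k => (1 - ε) * pk k i) atTop (𝓝 ((1 - ε) * p i)) :=
          (hpc i).const_mul _
        have hlt : (1 - ε) * p i < p i := by nlinarith [hppos i]
        exact (h1.eventually_lt_const hlt).mono fun k hk => hk.le
      have hBev : ∀ᶠ k in atTop, ∀ i, p i - (1 - ε) * pk k i ≤ q i - (1 - δ) * qk k i := by
        rw [Filter.eventually_all]
        intro i
        have h1 : Tendsto (fun k => p i - (1 - ε) * pk k i) atTop (𝓝 (ε * p i)) := by
          have := ((hpc i).const_mul (1 - ε)).const_sub (p i)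
          have heq : p i - (1 - ε) * p i = ε * p i := by ring
          rwa [heq] at this
        have h2 : Tendsto (fun k => q i - (1 - δ) * qk k i) atTop (𝓝 (δ * q i)) := by
          have := ((hqc i).const_mul (1 - δ)).const_sub (q i)
          have heq : q i - (1 - δ) * q i = δ * q i := by ring
          rwa [heq] at this
        exact (h1.eventually_lt h2 (hεc i)).mono fun k hk => hk.le
      filter_upwards [hAev, hBev] with k hA hB
      exact step_lemma hD (hpk k) (hqk k) hp hq hδ1 hε0 hεδ hA hB
  -- the sequence of δ's tending to 0
  have hδj0 : ∀ j : ℕ, (0:ℝ) < 1 / ((j:ℝ) + 2) := fun j => by positivity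
  have hδj1 : ∀ j : ℕ, (1:ℝ) / ((j:ℝ) + 2) < 1 := fun j => by
    rw [div_lt_one (by positivity)]
    have : (0:ℝ) ≤ (j:ℝ) := Nat.cast_nonneg j
    linarith
  have hBtend : ∀ A : ℝ≥0∞, Tendsto
      (fun j : ℕ => A + ENNReal.ofReal (-Real.logb 2 (1 - 1 / ((j:ℝ) + 2)))) atTop (𝓝 A) := by
    intro A
    have h1 : Tendsto (fun j : ℕ => 1 - 1 / ((j:ℝ) + 2)) atTop (𝓝 1) := by
      have h2 : Tendsto (fun j : ℕ => ((j:ℝ) + 2)) atTop atTop :=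
        tendsto_atTop_add_const_right _ 2 tendsto_natCast_atTop_atTop
      have h3 : Tendsto (fun j : ℕ => ((j:ℝ) + 2)⁻¹) atTop (𝓝 0) := h2.inv_tendsto_atTop
      have h4 := h3.const_sub 1
      rw [sub_zero] at h4
      simpa [one_div] using h4
    have h5 : Tendsto (fun j : ℕ => -Real.logb 2 (1 - 1 / ((j:ℝ) + 2))) atTop (𝓝 0) := by
      have hcont : ContinuousAt (fun x : ℝ => -Real.logb 2 x) 1 := by
        apply ContinuousAt.neg
        unfold Real.logb
        exact (Real.continuousAt_log (by norm_num)).div_const _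
      have := (hcont.tendsto.comp h1)
      simpa [Real.logb_one, Function.comp_def] using this
    have h6 : Tendsto (fun j : ℕ => ENNReal.ofReal (-Real.logb 2 (1 - 1 / ((j:ℝ) + 2))))
        atTop (𝓝 0) := by
      have := (ENNReal.continuous_ofReal.continuousAt).tendsto.comp h5
      simpa [Function.comp_def] using this
    have := tendsto_const_nhds (x := A) (f := atTop (α := ℕ)) |>.add h6
    simpa using this
  -- upper semicontinuity
  have part1 : Filter.limsup u atTop ≤ D n p q := by
    apply ge_of_tendsto (hBtend (D n p q))
    apply Filter.Eventually.of_forall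
    intro j
    exact Filter.limsup_le_of_le (h := (key _ (hδj0 j) (hδj1 j)).1)
  refine ⟨part1, fun hppos => ?_⟩
  have part2 : D n p q ≤ Filter.liminf u atTop := by
    apply ge_of_tendsto (hBtend (Filter.liminf u atTop))
    apply Filter.Eventually.of_forall
    intro j
    set B := ENNReal.ofReal (-Real.logb 2 (1 - 1 / ((j:ℝ) + 2))) with hB
    have h1 : D n p q ≤ Filter.liminf (fun k => u k + B) atTop :=
      Filter.le_liminf_of_le (h := ((key _ (hδj0 j) (hδj1 j)).2 hppos))
    rwa [liminf_add_const atTop u B (by isBoundedDefault) (by isBoundedDefault)] at h1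
  exact tendsto_of_le_liminf_of_limsup_le part2 part1
end
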